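/- arXiv:1509.00719 — 11 statements merged into one kernel-verified Lean document; each statement's English description precedes it below -/
import Mathlib

section
/- Let G and H be Polish groups, let ψ : G → H be a continuous injective group homomorphism, and let χ : H → H be a group automorphism of H that is also a homeomorphism, such that χ maps the image ψ(G) onto itself. Then there exists a group automorphism φ of G that is a homeomorphism of G and satisfies ψ(φ(g)) = χ(ψ(g)) for all g ∈ G. -/
open Filter Set Topology Pointwise

/-- Translate of a residual-equality by an open continuous map. -/
lemma pettis_aux {G : Type*} [Group G] [TopologicalSpace G] [IsTopologicalGroup G]
    [BaireSpace G] {A : Set G} (hA : BaireMeasurableSet A) (hm : ¬IsMeagre A) :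
    A⁻¹ * A ∈ 𝓝 (1 : G) := by
  obtain ⟨U, hUo, hAU⟩ := hA.residualEq_isOpen
  -- U is nonempty
  have hUne : U.Nonempty := by
    by_contra h
    rw [Set.not_nonempty_iff_eq_empty] at h
    subst h
    refine hm (Filter.mem_of_superset hAU ?_)
    intro x hx
    simp only [Set.mem_setOf_eq, eq_iff_iff, Set.mem_empty_iff_false, iff_false] at hx
    intro hxA
    exact (hx.1 hxA).elim
  -- U⁻¹ * U is an open neighborhood of 1
  have hUUo : IsOpen (U⁻¹ * U) := hUo.mul_left
  have h1 : (1 : G) ∈ U⁻¹ * U := by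
    obtain ⟨u, hu⟩ := hUne
    exact ⟨u⁻¹, Set.inv_mem_inv.2 hu, u, hu, inv_mul_cancel u⟩
  refine Filter.mem_of_superset (hUUo.mem_nhds h1) ?_
  -- every g ∈ U⁻¹ * U lies in A⁻¹ * A
  intro g hg
  rcases hg with ⟨u, hu, v, hv, rfl⟩
  set g := u * v with hgdef
  -- right translation by g⁻¹... we consider x ↦ x * g
  have hmap : Filter.Tendsto (fun x : G => x * (u * v)) (residual G) (residual G) :=
    tendsto_residual_of_isOpenMap (Homeomorph.mulRight (u * v)).continuous
      (Homeomorph.mulRight (u * v)).isOpenMap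
  have hAU' : ∀ᶠ x in residual G, (x * (u * v) ∈ A) = (x * (u * v) ∈ U) := hmap.eventually hAU
  -- the set where both equalities hold is residual, hence dense
  have hres : {x : G | (x ∈ A) = (x ∈ U) ∧ (x * (u * v) ∈ A) = (x * (u * v) ∈ U)}
      ∈ residual G := hAU.and hAU'
  have hdense : Dense {x : G | (x ∈ A) = (x ∈ U) ∧ (x * (u * v) ∈ A) = (x * (u * v) ∈ U)} :=
    dense_of_mem_residual hres
  -- u ∈ U⁻¹ means u⁻¹ ∈ U?  We have hu : u ∈ U⁻¹, hv : v ∈ U.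
  have hu' : u⁻¹ ∈ U := Set.mem_inv.1 hu
  have hWo : IsOpen (U ∩ {x : G | x * (u * v) ∈ U}) :=
    hUo.inter ((hUo.preimage (continuous_mul_right (u * v))))
  have hWne : (U ∩ {x : G | x * (u * v) ∈ U}).Nonempty := by
    refine ⟨u⁻¹, hu', ?_⟩
    simp only [Set.mem_setOf_eq, ← mul_assoc, inv_mul_cancel, one_mul]
    exact hv
  obtain ⟨x, hx, hxU, hxUg⟩ := hdense.exists_mem_open hWo hWne
  -- x ∈ A and x * (u*v) ∈ A
  have hxA : x ∈ A := by rw [hx.1]; exact hxU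
  have hxgA : x * (u * v) ∈ A := by rw [hx.2]; exact hxUg
  exact ⟨x⁻¹, Set.inv_mem_inv.2 hxA, x * (u * v), hxgA, by group⟩

/-- Automatic continuity: a Baire-measurable homomorphism from a Baire topological group to a
separable topological group is continuous. -/
lemma auto_continuity {G G' : Type*} [Group G] [TopologicalSpace G] [IsTopologicalGroup G]
    [BaireSpace G] [Group G'] [TopologicalSpace G'] [IsTopologicalGroup G']
    [TopologicalSpace.SeparableSpace G'] (f : G →* G')
    (hf : ∀ s : Set G', IsOpen s → BaireMeasurableSet (f ⁻¹' s)) : Continuous f := by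
  apply continuous_of_continuousAt_one f
  rw [ContinuousAt, map_one]
  intro W hW
  rw [Filter.mem_map]
  -- find open symmetric-ish V with V⁻¹ * V ⊆ W
  obtain ⟨V₀, hV₀o, hV₀1, hV₀W⟩ := exists_open_nhds_one_mul_subset hW
  set V : Set G' := V₀ ∩ V₀⁻¹ with hVdef
  have hVo : IsOpen V := hV₀o.inter hV₀o.inv
  have hV1 : (1 : G') ∈ V := ⟨hV₀1, by simpa using hV₀1⟩
  have hVW : V⁻¹ * V ⊆ W := by
    rintro _ ⟨a, ha, b, hb, rfl⟩
    exact hV₀W (Set.mul_mem_mul (by simpa using ha.2) hb.1)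
  -- countable dense set covers G' by translates of V
  obtain ⟨D, hDc, hDd⟩ := TopologicalSpace.exists_countable_dense G'
  have hcover : ∀ y : G', ∃ d ∈ D, y ∈ d • V := by
    intro y
    have : IsOpen (y • V⁻¹) := hVo.inv.smul y
    have hne : (y • V⁻¹).Nonempty := ⟨y, 1, by simpa using hV1, by simp⟩
    obtain ⟨d, hd, hdy⟩ := hDd.exists_mem_open this hne
    refine ⟨d, hd, ?_⟩
    rcases hdy with ⟨v, hv, rfl⟩
    exact ⟨v⁻¹, Set.mem_inv.1 hv, by simp [smul_eq_mul, mul_assoc]⟩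
  -- some preimage of a translate is non-meager
  have hnm : ∃ d ∈ D, ¬IsMeagre (f ⁻¹' (d • V)) := by
    by_contra h
    push_neg at h
    have hmeag : IsMeagre (⋃ d ∈ D, f ⁻¹' (d • V)) := by
      rw [IsMeagre, Set.compl_iUnion₂]
      exact (countable_bInter_mem hDc).2 fun d hd => h d hd
    have : IsMeagre (Set.univ : Set G) := by
      refine hmeag.mono ?_
      intro x _
      obtain ⟨d, hd, hxd⟩ := hcover (f x)
      exact Set.mem_biUnion hd hxd
    rw [IsMeagre, Set.compl_univ] at this
    have := dense_of_mem_residual this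
    simpa using this.nonempty
  obtain ⟨d, _, hdnm⟩ := hnm
  have hbm : BaireMeasurableSet (f ⁻¹' (d • V)) := hf _ (hVo.smul d)
  have hnh : (f ⁻¹' (d • V))⁻¹ * (f ⁻¹' (d • V)) ∈ 𝓝 (1 : G) := pettis_aux hbm hdnm
  refine Filter.mem_of_superset hnh ?_
  rintro _ ⟨a, ha, b, hb, rfl⟩
  rw [Set.mem_inv] at ha
  rcases ha with ⟨va, hva, hfa⟩
  rcases hb with ⟨vb, hvb, hfb⟩
  have hfa' : f a⁻¹ = d * va := by rw [← hfa]; simp [smul_eq_mul]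
  have hfb' : f b = d * vb := by rw [← hfb]; simp [smul_eq_mul]
  have h1 : f a = (d * va)⁻¹ := by rw [← hfa', map_inv, inv_inv]
  have key : f (a * b) = va⁻¹ * vb := by rw [map_mul, h1, hfb']; group
  show f (a * b) ∈ W
  rw [key]
  exact hVW (Set.mul_mem_mul (Set.inv_mem_inv.2 hva) hvb)

/-- Let `G` and `H` be Polish groups, let `ψ : G → H` be a continuous injective
group homomorphism, and let `χ : H → H` be a group automorphism of `H` that is also a
homeomorphism, such that `χ` maps the image `ψ(G)` onto itself. Then there exists a group
automorphism `φ` of `G` that is a homeomorphism of `G` and satisfies `ψ(φ(g)) = χ(ψ(g))`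
for all `g ∈ G`. -/
theorem stmt_0 {G H : Type*}
    [Group G] [TopologicalSpace G] [IsTopologicalGroup G] [PolishSpace G]
    [Group H] [TopologicalSpace H] [IsTopologicalGroup H] [PolishSpace H]
    (ψ : G →* H) (hψc : Continuous ψ) (hψi : Function.Injective ψ)
    (χ : H ≃* H) (hχc : Continuous χ) (hχsymm : Continuous χ.symm)
    (hχim : χ '' (Set.range ψ) = Set.range ψ) :
    ∃ φ : G ≃* G, Continuous φ ∧ Continuous φ.symm ∧ ∀ g : G, ψ (φ g) = χ (ψ g) := by
  borelize G H
  have hχim' : χ.symm '' (Set.range ψ) = Set.range ψ := by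
    conv_lhs => rw [← hχim]
    rw [← Set.image_comp]
    simp [Function.comp_def]
  have key : ∀ g : G, ∃ g', ψ g' = χ (ψ g) := by
    intro g
    have : χ (ψ g) ∈ Set.range ψ := hχim ▸ Set.mem_image_of_mem χ (Set.mem_range_self g)
    exact this.imp fun g' h => h
  have key' : ∀ g : G, ∃ g', ψ g' = χ.symm (ψ g) := by
    intro g
    have : χ.symm (ψ g) ∈ Set.range ψ := hχim' ▸ Set.mem_image_of_mem _ (Set.mem_range_self g)
    exact this.imp fun g' h => h
  choose F hF using key
  choose F' hF' using key'
  have hFF' : ∀ g, F' (F g) = g := fun g => hψi (by rw [hF', hF]; simp)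
  have hF'F : ∀ g, F (F' g) = g := fun g => hψi (by rw [hF, hF']; simp)
  have hFmul : ∀ a b : G, F (a * b) = F a * F b := by
    intro a b
    apply hψi
    simp only [map_mul, hF]
  let e : G ≃* G :=
    { toFun := F, invFun := F', left_inv := hFF', right_inv := hF'F, map_mul' := hFmul }
  -- measurability of F and F'
  have hψe : MeasurableEmbedding ψ := hψc.measurableEmbedding hψi
  have hFmeas : Measurable F := by
    rw [← hψe.measurable_comp_iff]
    have : ψ ∘ F = χ ∘ ψ := funext hF
    rw [this]
    exact (hχc.comp hψc).measurable
  have hF'meas : Measurable F' := by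
    rw [← hψe.measurable_comp_iff]
    have : ψ ∘ F' = χ.symm ∘ ψ := funext hF'
    rw [this]
    exact (hχsymm.comp hψc).measurable
  letI := TopologicalSpace.upgradeIsCompletelyMetrizable G
  have hFc : Continuous e := by
    apply auto_continuity e.toMonoidHom
    intro s hs
    exact ((hFmeas hs.measurableSet)).baireMeasurableSet
  have hF'c : Continuous e.symm := by
    apply auto_continuity e.symm.toMonoidHom
    intro s hs
    exact ((hF'meas hs.measurableSet)).baireMeasurableSet
  exact ⟨e, hFc, hF'c, hF⟩
end

section
/- Let G and H be Polish groups and let ψ : G → H be a normal compression. If α : H × G → G is any function satisfying ψ(α(h,g)) = h·ψ(g)·h⁻¹ for all h ∈ H and g ∈ G, then α is continuous (as a map from the product space H × G to G). -/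
open Topology Filter Set TopologicalSpace

section helpers

variable {X : Type*} [TopologicalSpace X]

lemma isMeagre_union' {s t : Set X} (hs : IsMeagre s) (ht : IsMeagre t) : IsMeagre (s ∪ t) := by
  rw [IsMeagre, Set.compl_union]; exact Filter.inter_mem hs ht

lemma not_isMeagre_of_isOpen' [BaireSpace X] {u : Set X} (huo : IsOpen u) (hne : u.Nonempty) :
    ¬ IsMeagre u := by
  intro h
  have hd : Dense uᶜ := dense_of_mem_residual h
  obtain ⟨x, hx1, hx2⟩ := hd.exists_mem_open huo hne
  exact hx1 hx2

lemma exists_nonmeager' {ι : Type*} [BaireSpace X] [Nonempty X] [Countable ι] {B : ι → Set X}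
    (h : ∀ x, ∃ i, x ∈ B i) : ∃ i, ¬ IsMeagre (B i) := by
  by_contra hc
  push_neg at hc
  have hU : IsMeagre (⋃ i, B i) := by
    rw [IsMeagre, Set.compl_iUnion]
    exact (countable_iInter_mem).mpr fun i => hc i
  have huniv : IsMeagre (Set.univ : Set X) := hU.mono (fun x _ => Set.mem_iUnion.mpr (h x))
  have hdense : Dense ((Set.univ : Set X)ᶜ) := dense_of_mem_residual huniv
  rw [Set.compl_univ] at hdense
  exact (hdense.nonempty).ne_empty rfl

lemma isMeagre_image_homeo' {Y : Type*} [TopologicalSpace Y] (e : X ≃ₜ Y) {s : Set X}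
    (hs : IsMeagre s) : IsMeagre (e '' s) := by
  rw [show e '' s = e.symm ⁻¹' s from e.toEquiv.image_eq_preimage_symm s]
  exact hs.preimage_of_isOpenMap e.symm.continuous e.symm.isOpenMap

lemma baireMeasurable_diff_open' {s u : Set X} (hsu : s =ᵇ u) : IsMeagre (u \ s) := by
  have h1 : {x | (x ∈ s) = (x ∈ u)} ∈ residual X := hsu
  refine Filter.mem_of_superset h1 ?_
  intro x hx
  simp only [Set.mem_setOf_eq] at hx
  simp only [Set.mem_compl_iff, Set.mem_diff]
  rintro ⟨hxu, hxs⟩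
  rw [← hx] at hxu
  exact hxs hxu

lemma meagre_of_eventuallyEq_empty' {s : Set X} (hsu : s =ᵇ (∅ : Set X)) : IsMeagre s := by
  have h1 : {x | (x ∈ s) = (x ∈ (∅ : Set X))} ∈ residual X := hsu
  refine Filter.mem_of_superset h1 ?_
  intro x hx
  simp only [Set.mem_setOf_eq, Set.mem_empty_iff_false, eq_iff_iff, iff_false] at hx
  exact hx

/-- Pettis-type theorem: if `A` is Baire measurable and non-meager in a topological group
which is a Baire space, then every `s` in a suitable neighborhood of `1` can be written
as `a⁻¹ * b` with `a, b ∈ A`. -/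
theorem pettis_mul' {X : Type*} [TopologicalSpace X] [Group X] [IsTopologicalGroup X]
    [BaireSpace X] {A : Set X} (hA : BaireMeasurableSet A) (hnA : ¬ IsMeagre A) :
    ∀ᶠ s in 𝓝 (1 : X), ∃ a, a ∈ A ∧ a * s ∈ A := by
  obtain ⟨u, huo, hsu⟩ := hA.residualEq_isOpen
  have hum : IsMeagre (u \ A) := baireMeasurable_diff_open' hsu
  have hune : u.Nonempty := by
    rcases Set.eq_empty_or_nonempty u with h | h
    · exfalso
      apply hnA
      subst h
      exact meagre_of_eventuallyEq_empty' hsu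
    · exact h
  obtain ⟨v, hv⟩ := hune
  have hN : {s : X | v * s ∈ u} ∈ 𝓝 (1 : X) := by
    have hcont : Continuous (fun s : X => v * s) := by fun_prop
    have ht := hcont.tendsto 1
    rw [mul_one] at ht
    exact ht (huo.mem_nhds hv)
  filter_upwards [hN] with s hvs
  set e := Homeomorph.mulRight s with he
  have him : IsMeagre (e '' (u \ A)) := isMeagre_image_homeo' e hum
  have hm : IsMeagre ((u \ A) ∪ e '' (u \ A)) := isMeagre_union' hum him
  set w := u ∩ e '' u with hw
  have hwo : IsOpen w := huo.inter (e.isOpenMap u huo)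
  have hwne : w.Nonempty := ⟨v * s, hvs, ⟨v, hv, by simp [e]⟩⟩
  have hne2 : (w \ ((u \ A) ∪ e '' (u \ A))).Nonempty := by
    by_contra hc
    rw [Set.not_nonempty_iff_eq_empty, Set.diff_eq_empty] at hc
    exact not_isMeagre_of_isOpen' hwo hwne (hm.mono hc)
  obtain ⟨y, ⟨hyu, hyeu⟩, hynm⟩ := hne2
  obtain ⟨x, hxu, hxy⟩ := hyeu
  rw [Set.mem_union] at hynm
  push_neg at hynm
  obtain ⟨hy1, hy2⟩ := hynm
  have hyA : y ∈ A := by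
    by_contra hyA
    exact hy1 ⟨hyu, hyA⟩
  have hxA : x ∈ A := by
    by_contra hxA
    exact hy2 ⟨x, ⟨hxu, hxA⟩, hxy⟩
  refine ⟨x, hxA, ?_⟩
  have hex : e x = x * s := by simp [e]
  rw [hex] at hxy
  rwa [hxy]

/-- A measurable homomorphism from a Polish group into a Polish group is continuous. -/
theorem measurable_monoidHom_continuous' {X Y : Type*}
    [Group X] [TopologicalSpace X] [IsTopologicalGroup X] [PolishSpace X]
    [MeasurableSpace X] [BorelSpace X] [BaireSpace X]
    [Group Y] [TopologicalSpace Y] [IsTopologicalGroup Y] [PolishSpace Y]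
    [MeasurableSpace Y] [BorelSpace Y]
    (f : X →* Y) (hf : Measurable f) : Continuous f := by
  apply continuous_of_continuousAt_one f
  rw [ContinuousAt, map_one]
  intro W hW
  rw [Filter.mem_map]
  have hc : Tendsto (fun q : Y × Y => q.1⁻¹ * q.2) (𝓝 (1, 1)) (𝓝 1) := by
    have hcont : Continuous (fun q : Y × Y => q.1⁻¹ * q.2) := by fun_prop
    simpa using hcont.tendsto ((1 : Y), (1 : Y))
  have hW2 : (fun q : Y × Y => q.1⁻¹ * q.2) ⁻¹' W ∈ 𝓝 (((1 : Y), (1 : Y))) := hc hW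
  rw [nhds_prod_eq, Filter.mem_prod_iff] at hW2
  obtain ⟨t₁, ht₁, t₂, ht₂, hts⟩ := hW2
  obtain ⟨V, hVsub, hVo, hV1⟩ := mem_nhds_iff.mp (Filter.inter_mem ht₁ ht₂)
  obtain ⟨Dc, hDc, hDd⟩ := TopologicalSpace.exists_countable_dense Y
  haveI : Countable Dc := hDc.to_subtype
  haveI : Nonempty X := ⟨1⟩
  have hcov : ∀ x : X, ∃ d : Dc, x ∈ f ⁻¹' ((fun y => (d : Y)⁻¹ * y) ⁻¹' V) := by
    intro x
    have hUo : IsOpen ((fun y : Y => y⁻¹ * f x) ⁻¹' V) := hVo.preimage (by fun_prop)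
    have hUne : ((fun y : Y => y⁻¹ * f x) ⁻¹' V).Nonempty := ⟨f x, by simpa using hV1⟩
    obtain ⟨d, hd1, hd2⟩ := hDd.exists_mem_open hUo hUne
    exact ⟨⟨d, hd1⟩, hd2⟩
  obtain ⟨d, hd⟩ := exists_nonmeager' hcov
  have hBo : IsOpen ((fun y : Y => (d : Y)⁻¹ * y) ⁻¹' V) := hVo.preimage (by fun_prop)
  have hmeas : MeasurableSet (f ⁻¹' ((fun y => (d : Y)⁻¹ * y) ⁻¹' V)) := hf hBo.measurableSet
  filter_upwards [pettis_mul' hmeas.baireMeasurableSet hd] with s hs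
  obtain ⟨a, haA, hasA⟩ := hs
  simp only [Set.mem_preimage] at haA hasA
  have key : ((d : Y)⁻¹ * f a)⁻¹ * ((d : Y)⁻¹ * f (a * s)) = f s := by
    rw [map_mul]
    group
  have hmem : (((d : Y)⁻¹ * f a), ((d : Y)⁻¹ * f (a * s))) ∈ t₁ ×ˢ t₂ :=
    ⟨(hVsub haA).1, (hVsub hasA).2⟩
  have hfin := hts hmem
  rw [Set.mem_preimage] at hfin
  rwa [key] at hfin

end helpers

/-- Let `G` and `H` be Polish groups and let `ψ : G → H` be a normal compression.
If `α : H × G → G` is any function satisfying `ψ(α(h,g)) = h·ψ(g)·h⁻¹` for all `h ∈ H` and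
`g ∈ G`, then `α` is continuous. -/
theorem stmt_1 {G H : Type*}
    [Group G] [TopologicalSpace G] [IsTopologicalGroup G] [PolishSpace G]
    [Group H] [TopologicalSpace H] [IsTopologicalGroup H] [PolishSpace H]
    (ψ : G →* H) (hψc : Continuous ψ) (hψi : Function.Injective ψ)
    (hdense : DenseRange (⇑ψ)) (hnorm : ψ.range.Normal)
    (α : H × G → G) (hα : ∀ (h : H) (g : G), ψ (α (h, g)) = h * ψ g * h⁻¹) :
    Continuous α := by
  classical
  letI mG : MeasurableSpace G := borel G
  haveI : BorelSpace G := ⟨rfl⟩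
  letI mH : MeasurableSpace H := borel H
  haveI : BorelSpace H := ⟨rfl⟩
  haveI : BaireSpace G := by exact inferInstance
  haveI : BaireSpace H := by exact inferInstance
  haveI : Nonempty H := ⟨1⟩
  -- algebraic identities
  have hone : ∀ g : G, α (1, g) = g := by
    intro g; apply hψi; rw [hα]; simp
  have honeR : ∀ h : H, α (h, 1) = 1 := by
    intro h; apply hψi; rw [hα]; simp
  have hactmul : ∀ (h : H) (g₁ g₂ : G), α (h, g₁ * g₂) = α (h, g₁) * α (h, g₂) := by
    intro h g₁ g₂; apply hψi; rw [hα, map_mul, map_mul, hα, hα]; group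
  have hmulact : ∀ (h₁ h₂ : H) (g : G), α (h₁ * h₂, g) = α (h₁, α (h₂, g)) := by
    intro h₁ h₂ g; apply hψi; rw [hα, hα, hα]; group
  have hinva : ∀ (h : H) (g : G), α (h⁻¹, α (h, g)) = g := by
    intro h g; rw [← hmulact, inv_mul_cancel, hone]
  -- measurability of α
  have hψe : MeasurableEmbedding (⇑ψ) := hψc.measurableEmbedding hψi
  have hαm : Measurable α := by
    have h1 : (⇑ψ ∘ α) = fun p : H × G => p.1 * ψ p.2 * p.1⁻¹ := funext fun p => hα p.1 p.2
    have h2 : Measurable (⇑ψ ∘ α) := by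
      rw [h1]
      exact Continuous.measurable (by fun_prop)
    exact hψe.measurable_comp_iff.mp h2
  -- Step 1 : each α (h, ·) is a continuous automorphism
  have hcontA : ∀ h : H, Continuous (fun g => α (h, g)) := by
    intro h
    exact measurable_monoidHom_continuous'
      { toFun := fun g => α (h, g), map_one' := honeR h, map_mul' := hactmul h }
      (hαm.comp (measurable_const.prodMk measurable_id))
  -- countable antitone basis of 𝓝 1 in G, with dense countable skeletons
  obtain ⟨V, hV⟩ := (𝓝 (1 : G)).exists_antitone_basis
  have hVmem : ∀ n, V n ∈ 𝓝 (1 : G) := fun n => hV.1.mem_of_mem trivial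
  have hDex : ∀ n : ℕ, ∃ D : Set G, D.Countable ∧ D ⊆ V n ∧ V n ⊆ closure D := by
    intro n
    obtain ⟨t, htc, htd⟩ := TopologicalSpace.exists_countable_dense (V n)
    refine ⟨Subtype.val '' t, htc.image _, Subtype.coe_image_subset _ _, ?_⟩
    intro x hx
    have h1 : (⟨x, hx⟩ : V n) ∈ closure t := htd _
    have h2 := map_mem_closure continuous_subtype_val h1 (Set.mapsTo_image _ _)
    simpa using h2
  choose D hDc hDsub hDdense using hDex
  -- extension of closed conditions from D n to its closure
  have hext : ∀ (h : H) (n : ℕ) (K : Set G), IsClosed K → (∀ d ∈ D n, α (h, d) ∈ K) →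
      ∀ w ∈ closure (D n), α (h, w) ∈ K := by
    intro h n K hK hd w hw
    have h1 := map_mem_closure (hcontA h) hw (fun d hd' => hd d hd')
    rwa [hK.closure_eq] at h1
  -- measurability of the basic condition sets
  have hmB : ∀ (c : H → H), Measurable c → ∀ (n : ℕ) (K : Set G), IsClosed K →
      MeasurableSet {h : H | ∀ d ∈ D n, α (c h, d) ∈ K} := by
    intro c hc n K hK
    have heq : {h : H | ∀ d ∈ D n, α (c h, d) ∈ K} = ⋂ d ∈ D n, (fun h => α (c h, d)) ⁻¹' K := by
      ext h; simp
    rw [heq]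
    exact MeasurableSet.biInter (hDc n)
      (fun d _ => (hαm.comp (hc.prodMk measurable_const)) hK.measurableSet)
  -- closed neighborhoods
  have hclosed : ∀ (x : G) (W : Set G), W ∈ 𝓝 x → ∃ K, K ∈ 𝓝 x ∧ IsClosed K ∧ K ⊆ W := by
    intro x W hW
    rcases (closed_nhds_basis x).mem_iff.mp hW with ⟨K, ⟨hK1, hK2⟩, hK3⟩
    exact ⟨K, hK1, hK2, hK3⟩
  -- (b) : for each g₀, h ↦ α (h, g₀) is continuous at 1
  have hb : ∀ g₀ : G, Tendsto (fun s : H => α (s, g₀)) (𝓝 1) (𝓝 g₀) := by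
    intro g₀
    rw [Filter.tendsto_def]
    intro W hW
    have hW1 : (fun k : G => g₀ * k) ⁻¹' W ∈ 𝓝 (1 : G) := by
      have hcont : Continuous (fun k : G => g₀ * k) := by fun_prop
      have ht := hcont.tendsto 1
      rw [mul_one] at ht
      exact ht hW
    obtain ⟨K, hKn, hKc, hKsub⟩ := hclosed 1 _ hW1
    obtain ⟨bs, hbsc, -, hbsb⟩ := TopologicalSpace.exists_countable_basis G
    haveI : Countable bs := hbsc.to_subtype
    set P : ℕ × bs → Prop :=
      fun i => ∀ y₁ ∈ (i.2 : Set G), ∀ y₂ ∈ (i.2 : Set G), y₁⁻¹ * y₂ ∈ closure (D i.1) with hP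
    set B : {i : ℕ × bs // P i} → Set H := fun i =>
      {h : H | ∀ d ∈ D i.1.1, α (h⁻¹, d) ∈ K} ∩ {h : H | α (h, g₀) ∈ (i.1.2 : Set G)} with hBdef
    have hcov : ∀ h : H, ∃ i, h ∈ B i := by
      intro h
      have t1 : Tendsto (fun v => α (h⁻¹, v)) (𝓝 1) (𝓝 1) := by
        have ht := (hcontA h⁻¹).tendsto 1
        rwa [honeR] at ht
      have hn' := t1 hKn
      rw [Filter.mem_map] at hn'
      obtain ⟨n, -, hn⟩ := hV.1.mem_iff.mp hn'
      set y := α (h, g₀) with hy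
      have hc2 : Tendsto (fun q : G × G => q.1⁻¹ * q.2) (𝓝 (y, y)) (𝓝 1) := by
        have hcont : Continuous (fun q : G × G => q.1⁻¹ * q.2) := by fun_prop
        have ht := hcont.tendsto (y, y)
        rwa [inv_mul_cancel] at ht
      have hm' := hc2 (hVmem n)
      rw [Filter.mem_map, nhds_prod_eq, Filter.mem_prod_iff] at hm'
      obtain ⟨t₁, ht₁, t₂, ht₂, hts⟩ := hm'
      obtain ⟨U, hUbs, hyU, hUsub⟩ := hbsb.mem_nhds_iff.mp (Filter.inter_mem ht₁ ht₂)
      have hPi : P (n, ⟨U, hUbs⟩) := by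
        intro y₁ hy₁ y₂ hy₂
        have hmem : (y₁, y₂) ∈ t₁ ×ˢ t₂ := ⟨(hUsub hy₁).1, (hUsub hy₂).2⟩
        have h3 := hts hmem
        rw [Set.mem_preimage] at h3
        exact (hDdense n) h3
      refine ⟨⟨(n, ⟨U, hUbs⟩), hPi⟩, ?_, ?_⟩
      · intro d hd
        exact hn (hDsub n hd)
      · exact hyU
    obtain ⟨i, hi⟩ := exists_nonmeager' hcov
    have hmeas : MeasurableSet (B i) := by
      refine (hmB (·⁻¹) measurable_inv i.1.1 K hKc).inter ?_
      exact (hαm.comp (measurable_id.prodMk measurable_const))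
        (hbsb.isOpen i.1.2.2).measurableSet
    filter_upwards [pettis_mul' hmeas.baireMeasurableSet hi] with s hs
    obtain ⟨a, ⟨haK, haU⟩, ⟨-, hbU⟩⟩ := hs
    have hwcl : (α (a, g₀))⁻¹ * α (a * s, g₀) ∈ closure (D i.1.1) := i.2 _ haU _ hbU
    have hKw : α (a⁻¹, (α (a, g₀))⁻¹ * α (a * s, g₀)) ∈ K := hext a⁻¹ i.1.1 K hKc haK _ hwcl
    have hcomp : α (s, g₀) = g₀ * α (a⁻¹, (α (a, g₀))⁻¹ * α (a * s, g₀)) := by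
      have h2 : α (s, g₀) = α (a⁻¹, α (a * s, g₀)) := by
        rw [← hmulact, inv_mul_cancel_left]
      have h1 : α (a * s, g₀) = α (a, g₀) * ((α (a, g₀))⁻¹ * α (a * s, g₀)) :=
        (mul_inv_cancel_left _ _).symm
      rw [h2]
      conv_lhs => rw [h1]
      rw [hactmul, hinva]
    rw [Set.mem_preimage, hcomp]
    exact hKsub hKw
  -- (a) : joint continuity at (1, 1)
  have ha : ∀ W ∈ 𝓝 (1 : G), ∃ T ∈ 𝓝 (1 : H), ∃ m : ℕ, ∀ s ∈ T, ∀ z ∈ V m, α (s, z) ∈ W := by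
    intro W hW
    obtain ⟨K, hKn, hKc, hKsub⟩ := hclosed 1 W hW
    have hCex : ∀ n : ℕ, ∃ C : Set G, C ∈ 𝓝 1 ∧ IsClosed C ∧ C ⊆ V n :=
      fun n => hclosed 1 _ (hVmem n)
    choose C hCn hCc hCsub using hCex
    set B : ℕ × ℕ → Set H := fun i =>
      {h : H | ∀ d ∈ D i.1, α (h⁻¹, d) ∈ K} ∩ {h : H | ∀ d ∈ D i.2, α (h, d) ∈ C i.1} with hBdef
    have hcov : ∀ h : H, ∃ i, h ∈ B i := by
      intro h
      have t1 : Tendsto (fun v => α (h⁻¹, v)) (𝓝 1) (𝓝 1) := by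
        have ht := (hcontA h⁻¹).tendsto 1
        rwa [honeR] at ht
      have hn' := t1 hKn
      rw [Filter.mem_map] at hn'
      obtain ⟨n, -, hn⟩ := hV.1.mem_iff.mp hn'
      have t2 : Tendsto (fun v => α (h, v)) (𝓝 1) (𝓝 1) := by
        have ht := (hcontA h).tendsto 1
        rwa [honeR] at ht
      have hm' := t2 (hCn n)
      rw [Filter.mem_map] at hm'
      obtain ⟨m, -, hm⟩ := hV.1.mem_iff.mp hm'
      exact ⟨(n, m), fun d hd => hn (hDsub n hd), fun d hd => hm (hDsub m hd)⟩
    obtain ⟨i, hi⟩ := exists_nonmeager' hcov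
    have hmeas : MeasurableSet (B i) :=
      (hmB (·⁻¹) measurable_inv i.1 K hKc).inter (hmB id measurable_id i.2 (C i.1) (hCc i.1))
    have hT := pettis_mul' hmeas.baireMeasurableSet hi
    refine ⟨{s | ∃ a, a ∈ B i ∧ a * s ∈ B i}, hT, i.2, ?_⟩
    rintro s ⟨a, ⟨haK, -⟩, -, hbC⟩ z hz
    have h1 : α (a * s, z) ∈ C i.1 :=
      hext (a * s) i.2 (C i.1) (hCc i.1) hbC z ((hDdense i.2) hz)
    have h2 : α (s, z) = α (a⁻¹, α (a * s, z)) := by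
      rw [← hmulact, inv_mul_cancel_left]
    have h3 : α (a * s, z) ∈ closure (D i.1) := hDdense i.1 (hCsub i.1 h1)
    have h4 : α (a⁻¹, α (a * s, z)) ∈ K := hext a⁻¹ i.1 K hKc haK _ h3
    rw [h2]
    exact hKsub h4
  have haT : Tendsto α (𝓝 ((1 : H), (1 : G))) (𝓝 (1 : G)) := by
    rw [Filter.tendsto_def]
    intro W hW
    obtain ⟨T, hT, m, hTm⟩ := ha W hW
    rw [nhds_prod_eq, Filter.mem_prod_iff]
    exact ⟨T, hT, V m, hVmem m, fun p hp => hTm p.1 hp.1 p.2 hp.2⟩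
  -- assembly
  rw [continuous_iff_continuousAt]
  rintro ⟨h₀, g₀⟩
  have key : ∀ p : H × G, α p = α (h₀, α (h₀⁻¹ * p.1, p.2 * g₀⁻¹) * α (h₀⁻¹ * p.1, g₀)) := by
    intro p
    rw [← hactmul, inv_mul_cancel_right, ← hmulact, mul_inv_cancel_left]
  have t1 : Tendsto (fun p : H × G => h₀⁻¹ * p.1) (𝓝 (h₀, g₀)) (𝓝 1) := by
    have hcont : Continuous (fun p : H × G => h₀⁻¹ * p.1) := by fun_prop
    have ht := hcont.tendsto (h₀, g₀)
    rwa [inv_mul_cancel] at ht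
  have t2 : Tendsto (fun p : H × G => p.2 * g₀⁻¹) (𝓝 (h₀, g₀)) (𝓝 1) := by
    have hcont : Continuous (fun p : H × G => p.2 * g₀⁻¹) := by fun_prop
    have ht := hcont.tendsto (h₀, g₀)
    rwa [mul_inv_cancel] at ht
  have t12 : Tendsto (fun p : H × G => (h₀⁻¹ * p.1, p.2 * g₀⁻¹)) (𝓝 (h₀, g₀)) (𝓝 (1, 1)) :=
    t1.prodMk_nhds t2
  have tA : Tendsto (fun p : H × G => α (h₀⁻¹ * p.1, p.2 * g₀⁻¹)) (𝓝 (h₀, g₀)) (𝓝 1) :=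
    haT.comp t12
  have tB : Tendsto (fun p : H × G => α (h₀⁻¹ * p.1, g₀)) (𝓝 (h₀, g₀)) (𝓝 g₀) :=
    (hb g₀).comp t1
  have tAB : Tendsto (fun p : H × G => α (h₀⁻¹ * p.1, p.2 * g₀⁻¹) * α (h₀⁻¹ * p.1, g₀))
      (𝓝 (h₀, g₀)) (𝓝 g₀) := by
    have ht := tA.mul tB
    rwa [one_mul] at ht
  have tF : Tendsto (fun p : H × G => α (h₀, α (h₀⁻¹ * p.1, p.2 * g₀⁻¹) * α (h₀⁻¹ * p.1, g₀)))
      (𝓝 (h₀, g₀)) (𝓝 (α (h₀, g₀))) := ((hcontA h₀).tendsto g₀).comp tAB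
  exact tF.congr (fun p => (key p).symm)
end

section
/- Let G and H be Polish groups, let ψ : G → H be a normal compression, and let K be a closed normal subgroup of G. Then the image ψ(K) is a normal subgroup of H: for all h ∈ H and k ∈ K, the element h·ψ(k)·h⁻¹ lies in ψ(K). -/
open Set Filter Topology Function
open scoped Pointwise

section Aux

/-- A nonempty open subset of a Polish space is not meager. -/
lemma aux_open_not_meagre {X : Type*} [TopologicalSpace X] [PolishSpace X]
    {U : Set X} (hU : IsOpen U) (hne : U.Nonempty) : ¬ IsMeagre U := by
  letI := TopologicalSpace.upgradeIsCompletelyMetrizable X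
  intro h
  have hd : Dense Uᶜ := dense_of_mem_residual h
  obtain ⟨x, hx⟩ := hd.inter_open_nonempty U hU hne
  exact hx.2 hx.1

/-- A countable union of meager sets (indexed by a countable set) is meager. -/
lemma aux_isMeagre_biUnion {X : Type*} [TopologicalSpace X] {ι : Type*} {s : Set ι}
    (hs : s.Countable) {f : ι → Set X} (h : ∀ i ∈ s, IsMeagre (f i)) :
    IsMeagre (⋃ i ∈ s, f i) := by
  rw [IsMeagre, Set.compl_iUnion₂]
  exact (countable_bInter_mem hs).mpr h

lemma aux_isMeagre_union {X : Type*} [TopologicalSpace X] {s t : Set X}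
    (hs : IsMeagre s) (ht : IsMeagre t) : IsMeagre (s ∪ t) := by
  rw [IsMeagre, Set.compl_union]
  exact Filter.inter_mem hs ht

/-- A function between Polish spaces whose graph is closed is (Borel) measurable. -/
lemma aux_measurable_of_closed_graph {X Y : Type*}
    [TopologicalSpace X] [PolishSpace X] [MeasurableSpace X] [BorelSpace X]
    [TopologicalSpace Y] [PolishSpace Y] [MeasurableSpace Y] [BorelSpace Y]
    (f : X → Y) (hf : IsClosed {p : X × Y | p.2 = f p.1}) : Measurable f := by
  set Γ : Set (X × Y) := {p : X × Y | p.2 = f p.1} with hΓ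
  haveI : PolishSpace Γ := hf.polishSpace
  let π : Γ → X := fun p => (p : X × Y).1
  have hπc : Continuous π := continuous_fst.comp continuous_subtype_val
  have hπi : Function.Injective π := by
    rintro ⟨⟨x₁, y₁⟩, h₁⟩ ⟨⟨x₂, y₂⟩, h₂⟩ h
    simp only [π] at h
    simp only [hΓ, Set.mem_setOf_eq] at h₁ h₂
    subst h
    simp_all
  have hemb : MeasurableEmbedding π := hπc.measurableEmbedding hπi
  intro B hB
  have key : f ⁻¹' B = π '' {p : Γ | (p : X × Y).2 ∈ B} := by
    ext x
    constructor
    · intro hx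
      exact ⟨⟨(x, f x), rfl⟩, hx, rfl⟩
    · rintro ⟨⟨⟨x', y'⟩, hp⟩, hmem, rfl⟩
      simp only [hΓ, Set.mem_setOf_eq] at hp
      simpa [π, ← hp] using hmem
  rw [key]
  exact hemb.measurableSet_image.mpr
    ((continuous_snd.comp continuous_subtype_val).measurable hB)

variable {E : Type*} [Group E] [TopologicalSpace E] [IsTopologicalGroup E] [PolishSpace E]

/-- Pettis' difference lemma: if `B` is Baire measurable and non-meager in a Polish group,
then `B⁻¹ * B` is a neighborhood of `1`. -/
lemma aux_pettis_nhds {B : Set E} (hB : BaireMeasurableSet B) (hnm : ¬ IsMeagre B) :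
    B⁻¹ * B ∈ 𝓝 (1 : E) := by
  obtain ⟨U, Uo, hBU⟩ := hB.residualEq_isOpen
  have hMres : {x : E | x ∈ B ↔ x ∈ U} ∈ residual E := by
    filter_upwards [hBU] with x hx
    exact iff_of_eq hx
  have hM : IsMeagre {x : E | x ∈ B ↔ x ∈ U}ᶜ := by
    rw [IsMeagre, compl_compl]; exact hMres
  have hUne : U.Nonempty := by
    by_contra hUe
    rw [Set.not_nonempty_iff_eq_empty] at hUe
    apply hnm
    apply hM.mono
    intro x hx
    simp only [Set.mem_compl_iff, Set.mem_setOf_eq, hUe] at *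
    tauto
  obtain ⟨u₀, hu₀⟩ := hUne
  have hN : (fun x : E => u₀ * x) ⁻¹' U ∈ 𝓝 (1 : E) := by
    refine (Uo.preimage (continuous_mul_left u₀)).mem_nhds ?_
    simpa using hu₀
  refine Filter.mem_of_superset hN ?_
  intro x hx
  -- find y with y ∈ B and y * x ∈ B
  set O : Set E := U ∩ (fun y : E => y * x) ⁻¹' U with hO
  have hOo : IsOpen O := Uo.inter (Uo.preimage (continuous_mul_right x))
  have hOne : O.Nonempty := ⟨u₀, hu₀, hx⟩
  have hOnm : ¬ IsMeagre O := aux_open_not_meagre hOo hOne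
  set M : Set E := {x : E | x ∈ B ↔ x ∈ U}ᶜ with hMdef
  have hM' : IsMeagre (M ∪ (fun y : E => y * x) ⁻¹' M) :=
    aux_isMeagre_union hM
      (hM.preimage_of_isOpenMap (continuous_mul_right x) (Homeomorph.mulRight x).isOpenMap)
  have : ¬ (O ⊆ M ∪ (fun y : E => y * x) ⁻¹' M) := fun hsub => hOnm (hM'.mono hsub)
  obtain ⟨y, hyO, hyM⟩ := Set.not_subset.mp this
  simp only [Set.mem_union, not_or, Set.mem_preimage, hMdef, Set.mem_compl_iff,
    Set.mem_setOf_eq, not_not] at hyM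
  have hyB : y ∈ B := hyM.1.mpr hyO.1
  have hyxB : y * x ∈ B := hyM.2.mpr hyO.2
  have : x = y⁻¹ * (y * x) := by group
  rw [this]
  exact Set.mul_mem_mul (Set.inv_mem_inv.mpr hyB) hyxB

/-- Pettis' theorem: a Borel measurable homomorphism between Polish groups is continuous. -/
lemma aux_pettis_continuous {F : Type*}
    [Group F] [TopologicalSpace F] [IsTopologicalGroup F] [PolishSpace F]
    [MeasurableSpace E] [BorelSpace E] [MeasurableSpace F] [BorelSpace F]
    (φ : E →* F) (hφ : Measurable φ) : Continuous φ := by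
  apply continuous_of_continuousAt_one φ
  rw [ContinuousAt, map_one]
  intro V hV
  rw [Filter.mem_map]
  obtain ⟨W, Wo, W1, hWW⟩ := exists_open_nhds_one_mul_subset hV
  set W' : Set F := W ∩ W⁻¹ with hW'
  have hW'o : IsOpen W' := Wo.inter Wo.inv
  have hW'1 : (1 : F) ∈ W' := ⟨W1, by simpa using W1⟩
  have hW'symm : ∀ z : F, z ∈ W' → z⁻¹ ∈ W' := by
    rintro z ⟨h1, h2⟩
    exact ⟨h2, by simpa using h1⟩
  set B : Set E := φ ⁻¹' W' with hB
  -- countable dense subset of the range of φ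
  haveI : TopologicalSpace.SeparableSpace (Set.range φ) := by infer_instance
  obtain ⟨S, hScount, hSdense⟩ := TopologicalSpace.exists_countable_dense (Set.range φ)
  set S' : Set F := Subtype.val '' S with hS'
  have hS'count : S'.Countable := hScount.image _
  have hS'sub : S' ⊆ Set.range φ := Subtype.coe_image_subset _ _
  have hrange_sub : Set.range φ ⊆ closure S' := by
    intro y hy
    have h0 : (⟨y, hy⟩ : Set.range φ) ∈ closure S := hSdense _
    exact image_closure_subset_closure_image continuous_subtype_val ⟨_, h0, rfl⟩
  -- the translated preimages cover E
  set P : F → Set E := fun y => {g : E | y⁻¹ * φ g ∈ W'} with hP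
  have hcover : (Set.univ : Set E) ⊆ ⋃ y ∈ S', P y := by
    intro g _
    have h1 : φ g ∈ closure S' := hrange_sub (Set.mem_range_self g)
    have h2 : IsOpen {y : F | y⁻¹ * φ g ∈ W'} :=
      hW'o.preimage (by continuity)
    have h3 : φ g ∈ {y : F | y⁻¹ * φ g ∈ W'} := by simp [hW'1]
    obtain ⟨y, hyW, hyS⟩ := mem_closure_iff.mp h1 _ h2 h3
    exact Set.mem_biUnion hyS hyW
  -- some piece is nonmeager
  have hne : ¬ IsMeagre (Set.univ : Set E) :=
    aux_open_not_meagre isOpen_univ ⟨1, trivial⟩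
  have hex : ∃ y ∈ S', ¬ IsMeagre (P y) := by
    by_contra hall
    push_neg at hall
    exact hne ((aux_isMeagre_biUnion hS'count hall).mono hcover)
  obtain ⟨y, hyS, hynm⟩ := hex
  obtain ⟨x, rfl⟩ := hS'sub hyS
  -- P (φ x) is a translate of B
  have hPx : P (φ x) = (fun g : E => x⁻¹ * g) ⁻¹' B := by
    ext g
    simp only [hP, Set.mem_setOf_eq, Set.mem_preimage, hB, map_mul, map_inv]
  have hBnm : ¬ IsMeagre B := by
    intro hmB
    apply hynm
    rw [hPx]
    exact hmB.preimage_of_isOpenMap (continuous_mul_left x⁻¹)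
      (Homeomorph.mulLeft x⁻¹).isOpenMap
  have hBbm : BaireMeasurableSet B :=
    (hφ hW'o.measurableSet).baireMeasurableSet
  have hnhds : B⁻¹ * B ∈ 𝓝 (1 : E) := aux_pettis_nhds hBbm hBnm
  refine Filter.mem_of_superset hnhds ?_
  rintro z ⟨a, ha, b, hb, rfl⟩
  rw [Set.mem_inv] at ha
  have h1 : φ a⁻¹ ∈ W' := ha
  have h2 : φ a ∈ W' := by
    have := hW'symm _ h1
    simpa using this
  have h3 : φ b ∈ W' := hb
  have : φ (a * b) = φ a * φ b := map_mul _ _ _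
  rw [Set.mem_preimage, this]
  exact hWW (Set.mul_mem_mul h2.1 h3.1)

/-- Topological zero-one law: a Baire measurable set invariant under right translations by a
dense set of elements is either meager or comeager. -/
lemma aux_zero_one {Z : Set E} (hZ : BaireMeasurableSet Z) {D : Set E} (hD : Dense D)
    (hinv : ∀ d ∈ D, (fun x : E => x * d) ⁻¹' Z = Z) :
    IsMeagre Z ∨ Z ∈ residual E := by
  by_cases hm : IsMeagre Z
  · exact Or.inl hm
  right
  obtain ⟨D₀, hD₀sub, hD₀count, hD₀dense⟩ := hD.exists_countable_dense_subset
  obtain ⟨U, Uo, hZU⟩ := hZ.residualEq_isOpen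
  have hMres : {x : E | x ∈ Z ↔ x ∈ U} ∈ residual E := by
    filter_upwards [hZU] with x hx
    exact iff_of_eq hx
  set M : Set E := {x : E | x ∈ Z ↔ x ∈ U}ᶜ with hMdef
  have hM : IsMeagre M := by rw [IsMeagre, hMdef, compl_compl]; exact hMres
  -- `U` is nonempty
  have hUne : U.Nonempty := by
    by_contra hUe
    rw [Set.not_nonempty_iff_eq_empty] at hUe
    apply hm
    apply hM.mono
    intro x hx
    simp only [hMdef, Set.mem_compl_iff, Set.mem_setOf_eq, hUe] at *
    tauto
  -- for each d ∈ D₀, U and its translate differ by a meager set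
  have hMd : ∀ d ∈ D₀, IsMeagre (((fun x : E => x * d) ⁻¹' U) \ U) := by
    intro d hd
    have htend : Tendsto (fun x : E => x * d) (residual E) (residual E) :=
      tendsto_residual_of_isOpenMap (continuous_mul_right d) (Homeomorph.mulRight d).isOpenMap
    have h1 : ((fun x : E => x * d) ⁻¹' Z : Set E) =ᵇ ((fun x : E => x * d) ⁻¹' U) :=
      hZU.comp_tendsto htend
    rw [hinv d (hD₀sub hd)] at h1
    have h2 : {x : E | x ∈ Z ↔ x ∈ (fun x : E => x * d) ⁻¹' U} ∈ residual E := by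
      filter_upwards [h1] with x hx
      exact iff_of_eq hx
    have h3 : (((fun x : E => x * d) ⁻¹' U) \ U) ⊆
        ({x : E | x ∈ Z ↔ x ∈ (fun x : E => x * d) ⁻¹' U}ᶜ ∪ M) := by
      intro x hx
      by_contra hcon
      simp only [hMdef, Set.mem_union, Set.mem_compl_iff, Set.mem_setOf_eq, not_or,
        not_not] at hcon
      have hxZ : x ∈ Z := hcon.1.mpr hx.1
      exact hx.2 (hcon.2.mp hxZ)
    refine (aux_isMeagre_union ?_ hM).mono h3
    rw [IsMeagre, compl_compl]; exact h2
  -- the union of the translates of U is open and dense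
  set V : Set E := ⋃ d ∈ D₀, (fun x : E => x * d) ⁻¹' U with hV
  have hVo : IsOpen V :=
    isOpen_biUnion fun d _ => Uo.preimage (continuous_mul_right d)
  have hVd : Dense V := by
    rw [dense_iff_inter_open]
    rintro W hWo ⟨w, hw⟩
    obtain ⟨u, hu⟩ := hUne
    have hopen : IsOpen ((fun d : E => u * d⁻¹) ⁻¹' W) :=
      hWo.preimage (by continuity)
    have hne' : ((fun d : E => u * d⁻¹) ⁻¹' W).Nonempty := ⟨w⁻¹ * u, by simpa [mul_assoc]⟩
    obtain ⟨d, hdW, hdD⟩ := hD₀dense.inter_open_nonempty _ hopen hne'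
    refine ⟨u * d⁻¹, hdW, ?_⟩
    refine Set.mem_biUnion hdD ?_
    simpa [mul_assoc] using hu
  -- conclude
  have hVres : V ∈ residual E := residual_of_dense_open hVo hVd
  have hZc : IsMeagre Zᶜ := by
    have hsub : Zᶜ ⊆ M ∪ (Vᶜ ∪ ⋃ d ∈ D₀, (((fun x : E => x * d) ⁻¹' U) \ U)) := by
      intro x hx
      by_cases hxM : x ∈ M
      · exact Or.inl hxM
      simp only [hMdef, Set.mem_compl_iff, Set.mem_setOf_eq, not_not] at hxM
      have hxU : x ∉ U := fun hU' => hx (hxM.mpr hU')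
      by_cases hxV : x ∈ V
      · right; right
        obtain ⟨d, hd, hxd⟩ := Set.mem_iUnion₂.mp hxV
        exact Set.mem_iUnion₂.mpr ⟨d, hd, hxd, hxU⟩
      · exact Or.inr (Or.inl hxV)
    refine (aux_isMeagre_union hM (aux_isMeagre_union ?_ ?_)).mono hsub
    · rw [IsMeagre, compl_compl]; exact hVres
    · exact aux_isMeagre_biUnion hD₀count hMd
  rw [IsMeagre, compl_compl] at hZc
  exact hZc

end Aux

/-- Let `G` and `H` be Polish groups, let `ψ : G → H` be a normal compression,
and let `K` be a closed normal subgroup of `G`. Then the image `ψ(K)` is a normal subgroup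
of `H`: for all `h ∈ H` and `k ∈ K`, the element `h·ψ(k)·h⁻¹` lies in `ψ(K)`. -/
theorem stmt_3 {G H : Type*}
    [Group G] [TopologicalSpace G] [IsTopologicalGroup G] [PolishSpace G]
    [Group H] [TopologicalSpace H] [IsTopologicalGroup H] [PolishSpace H]
    (ψ : G →* H) (hψc : Continuous ψ) (hψi : Function.Injective ψ)
    (hdense : DenseRange (⇑ψ)) (hnorm : ψ.range.Normal)
    (K : Subgroup G) (hKc : IsClosed (K : Set G)) (hKn : K.Normal) :
    ∀ (h : H), ∀ k ∈ K, h * ψ k * h⁻¹ ∈ ψ '' (K : Set G) := by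
  classical
  borelize G H
  -- the conjugation maps pulled back through ψ
  have hmem : ∀ (t : H) (g : G), t * ψ g * t⁻¹ ∈ ψ.range :=
    fun t g => hnorm.conj_mem (ψ g) ⟨g, rfl⟩ t
  set a : H → G → G := fun t g => (hmem t g).choose with ha
  have hψa : ∀ (t : H) (g : G), ψ (a t g) = t * ψ g * t⁻¹ :=
    fun t g => (hmem t g).choose_spec
  have a_comp : ∀ (t s : H) (g : G), a (t * s) g = a t (a s g) := by
    intro t s g
    apply hψi
    rw [hψa, hψa, hψa]
    group
  have a_one : ∀ g : G, a 1 g = g := by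
    intro g
    apply hψi
    rw [hψa]
    group
  have a_inv_cancel : ∀ (t : H) (g : G), a t⁻¹ (a t g) = g := by
    intro t g
    rw [← a_comp, inv_mul_cancel, a_one]
  have a_inj : ∀ t : H, Function.Injective (a t) := by
    intro t
    exact Function.LeftInverse.injective (a_inv_cancel t)
  have a_psi : ∀ (g₀ g : G), a (ψ g₀) g = g₀ * g * g₀⁻¹ := by
    intro g₀ g
    apply hψi
    rw [hψa, map_mul, map_mul, map_inv]
  -- each `a t` is measurable (closed graph) hence continuous (Pettis)
  have a_meas : ∀ t : H, Measurable (a t) := by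
    intro t
    apply aux_measurable_of_closed_graph
    have hgr : {p : G × G | p.2 = a t p.1} = {p : G × G | ψ p.2 = t * ψ p.1 * t⁻¹} := by
      ext p
      simp only [Set.mem_setOf_eq]
      constructor
      · intro hp; rw [hp, hψa]
      · intro hp
        exact hψi (by rw [hψa]; exact hp)
    rw [hgr]
    exact isClosed_eq (hψc.comp continuous_snd)
      (((continuous_const.mul (hψc.comp continuous_fst)).mul continuous_const))
  have a_cont : ∀ t : H, Continuous (a t) := by
    intro t
    have map_mul' : ∀ g₁ g₂ : G, a t (g₁ * g₂) = a t g₁ * a t g₂ := by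
      intro g₁ g₂
      apply hψi
      rw [hψa, map_mul, map_mul, hψa, hψa]
      group
    have map_one' : a t 1 = 1 := by
      apply hψi
      rw [hψa]
      simp
    exact aux_pettis_continuous ⟨⟨a t, map_one'⟩, map_mul'⟩ (a_meas t)
  -- the map `t ↦ a t k` is measurable for each fixed `k` (closed graph)
  have c_meas : ∀ k : G, Measurable (fun t : H => a t k) := by
    intro k
    apply aux_measurable_of_closed_graph
    have hgr : {p : H × G | p.2 = a p.1 k} = {p : H × G | ψ p.2 = p.1 * ψ k * p.1⁻¹} := by
      ext p
      simp only [Set.mem_setOf_eq]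
      constructor
      · intro hp; rw [hp, hψa]
      · intro hp
        exact hψi (by rw [hψa]; exact hp)
    rw [hgr]
    exact isClosed_eq (hψc.comp continuous_snd)
      ((continuous_fst.mul continuous_const).mul (continuous_fst.inv))
  -- `F t` is the image of K under `a t`; it is a closed set
  set F : H → Set G := fun t => a t '' (K : Set G) with hF
  have hFpre : ∀ t : H, F t = a t⁻¹ ⁻¹' (K : Set G) := by
    intro t
    ext x
    constructor
    · rintro ⟨g, hg, rfl⟩
      rwa [Set.mem_preimage, a_inv_cancel]
    · intro hx
      have : x = a t (a t⁻¹ x) := by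
        conv_lhs => rw [← a_one x, ← mul_inv_cancel t, a_comp]
      exact this ▸ Set.mem_image_of_mem _ hx
  have hFclosed : ∀ t : H, IsClosed (F t) := by
    intro t
    rw [hFpre]
    exact hKc.preimage (a_cont t⁻¹)
  -- conjugation preserves K
  have hconjK : ∀ g : G, (fun x : G => g * x * g⁻¹) '' (K : Set G) = (K : Set G) := by
    intro g
    ext x
    constructor
    · rintro ⟨y, hy, rfl⟩
      exact hKn.conj_mem y hy g
    · intro hx
      refine ⟨g⁻¹ * x * g, ?_, by group⟩
      have := hKn.conj_mem x hx g⁻¹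
      simpa using this
  -- right invariance of F under translation by elements of the range of ψ
  have hFinv : ∀ (t : H) (g : G), F (t * ψ g) = F t := by
    intro t g
    have h1 : ∀ x : G, a (t * ψ g) x = a t (g * x * g⁻¹) := by
      intro x
      rw [a_comp, a_psi]
    calc F (t * ψ g) = a t '' ((fun x : G => g * x * g⁻¹) '' (K : Set G)) := by
          rw [hF]
          simp only [← Set.image_comp]
          apply Set.image_congr
          intro x _
          exact h1 x
      _ = F t := by rw [hconjK]
  -- countable dense subset of K
  haveI : TopologicalSpace.SeparableSpace (K : Set G) := by infer_instance
  obtain ⟨Kd₀, hKd₀count, hKd₀dense⟩ :=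
    TopologicalSpace.exists_countable_dense ((K : Set G) : Set G)
  set Kd : Set G := Subtype.val '' Kd₀ with hKd
  have hKdcount : Kd.Countable := hKd₀count.image _
  have hKdsub : Kd ⊆ (K : Set G) := Subtype.coe_image_subset _ _
  have hKdense : (K : Set G) ⊆ closure Kd := by
    intro x hx
    have h0 : (⟨x, hx⟩ : (K : Set G)) ∈ closure Kd₀ := hKd₀dense _
    exact image_closure_subset_closure_image continuous_subtype_val ⟨_, h0, rfl⟩
  -- countable basis of G
  obtain ⟨bs, hbs_count, -, hbasis⟩ := TopologicalSpace.exists_countable_basis G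
  -- the test sets
  set Z : Set G → Set H := fun V => {t : H | (F t ∩ V).Nonempty} with hZ
  have hZ_eq : ∀ V : Set G, IsOpen V → Z V = ⋃ k ∈ Kd, {t : H | a t k ∈ V} := by
    intro V hV
    ext t
    constructor
    · rintro ⟨x, ⟨g, hgK, rfl⟩, hxV⟩
      have h1 : a t g ∈ closure (a t '' Kd) :=
        (Set.image_mono hKdense).trans
          (image_closure_subset_closure_image (a_cont t)) (Set.mem_image_of_mem _ hgK)
      obtain ⟨y, hyV, k, hkKd, rfl⟩ := mem_closure_iff.mp h1 V hV hxV
      exact Set.mem_biUnion hkKd hyV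
    · intro ht
      obtain ⟨k, hkKd, hkt⟩ := Set.mem_iUnion₂.mp ht
      exact ⟨a t k, Set.mem_image_of_mem _ (hKdsub hkKd), hkt⟩
  have hZbm : ∀ V ∈ bs, BaireMeasurableSet (Z V) := by
    intro V hV
    have : MeasurableSet (Z V) := by
      rw [hZ_eq V (hbasis.isOpen hV)]
      exact MeasurableSet.biUnion hKdcount
        (fun k _ => (c_meas k) (hbasis.isOpen hV).measurableSet)
    exact this.baireMeasurableSet
  have hZinv : ∀ V : Set G, ∀ d ∈ Set.range ψ, (fun x : H => x * d) ⁻¹' (Z V) = Z V := by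
    rintro V d ⟨g, rfl⟩
    ext t
    simp only [Set.mem_preimage, hZ, Set.mem_setOf_eq, hFinv]
  -- zero-one law for each basis element
  have hZ01 : ∀ V ∈ bs, IsMeagre (Z V) ∨ Z V ∈ residual H := by
    intro V hV
    exact aux_zero_one (hZbm V hV) hdense (hZinv V)
  -- the comeager set where F is constant
  set W : Set G → Set H := fun V => if Z V ∈ residual H then Z V else (Z V)ᶜ with hW
  have hWres : ∀ V ∈ bs, W V ∈ residual H := by
    intro V hV
    by_cases hr : Z V ∈ residual H
    · rw [hW]; simp only [if_pos hr]; exact hr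
    · rw [hW]; simp only [if_neg hr]
      rcases hZ01 V hV with hm | hres
      · exact hm
      · exact absurd hres hr
  set C : Set H := ⋂ V ∈ bs, W V with hC
  have hCres : C ∈ residual H := (countable_bInter_mem hbs_count).mpr hWres
  -- on C, F is constant
  have hFC : ∀ t ∈ C, ∀ s ∈ C, F t ⊆ F s := by
    intro t ht s hs x hx
    by_contra hxs
    obtain ⟨V, hVbs, hxV, hVsub⟩ :=
      hbasis.exists_subset_of_mem_open hxs (hFclosed s).isOpen_compl
    have htZ : t ∈ Z V := ⟨x, hx, hxV⟩
    have hsZ : s ∉ Z V := by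
      rintro ⟨y, hyF, hyV⟩
      exact hVsub hyV hyF
    have htW : t ∈ W V := Set.mem_iInter₂.mp ht V hVbs
    have hsW : s ∈ W V := Set.mem_iInter₂.mp hs V hVbs
    by_cases hr : Z V ∈ residual H
    · rw [hW] at hsW; simp only [if_pos hr] at hsW
      exact hsZ hsW
    · rw [hW] at htW; simp only [if_neg hr] at htW
      exact htW htZ
  have hFC' : ∀ t ∈ C, ∀ s ∈ C, F t = F s :=
    fun t ht s hs => Set.Subset.antisymm (hFC t ht s hs) (hFC s hs t ht)
  -- C is nonempty
  have hCd : Dense C := by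
    letI := TopologicalSpace.upgradeIsCompletelyMetrizable H
    exact dense_of_mem_residual hCres
  obtain ⟨t₀, ht₀⟩ := hCd.nonempty
  -- preimages of C under translations are residual
  have hCtrans : ∀ h : H, (fun s : H => h * s) ⁻¹' C ∈ residual H := by
    intro h
    exact tendsto_residual_of_isOpenMap (continuous_mul_left h)
      (Homeomorph.mulLeft h).isOpenMap hCres
  have hpair : ∀ t : H, ∃ s : H, s ∈ C ∧ t * s ∈ C := by
    intro t
    have hres2 : C ∩ ((fun s : H => t * s) ⁻¹' C) ∈ residual H :=
      Filter.inter_mem hCres (hCtrans t)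
    have hd : Dense (C ∩ ((fun s : H => t * s) ⁻¹' C)) := by
      letI := TopologicalSpace.upgradeIsCompletelyMetrizable H
      exact dense_of_mem_residual hres2
    obtain ⟨s, hs1, hs2⟩ := hd.nonempty
    exact ⟨s, hs1, hs2⟩
  -- every t ∈ C satisfies F t = K
  have hFK : ∀ t ∈ C, F t = (K : Set G) := by
    intro t ht
    obtain ⟨s, hsC, htsC⟩ := hpair t
    have h1 : F (t * s) = a t '' (F s) := by
      rw [hF]
      simp only [← Set.image_comp]
      apply Set.image_congr
      intro x _
      exact a_comp t s x
    have h2 : a t '' (F s) = F t₀ := by rw [← h1]; exact hFC' _ htsC _ ht₀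
    have h3 : F s = F t₀ := hFC' _ hsC _ ht₀
    have h4 : F t = F t₀ := hFC' _ ht _ ht₀
    -- a t '' (F t₀) = F t₀ and a t '' K = F t₀, so K = F t₀
    have h5 : a t '' (F t₀) = F t₀ := by
      conv_lhs => rw [← h3]
      exact h2
    have h6 : a t '' (K : Set G) = F t₀ := h4
    have h7 : (K : Set G) = F t₀ := by
      have := Set.image_injective.mpr (a_inj t) (h6.trans h5.symm)
      exact this
    rw [h4, ← h7]
  -- finish
  intro h k hk
  obtain ⟨t, htC, hhtC⟩ := hpair h
  have h1 : a t '' (K : Set G) = (K : Set G) := hFK t htC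
  have h2 : a (h * t) '' (K : Set G) = (K : Set G) := hFK _ hhtC
  have h3 : a t⁻¹ '' (K : Set G) = (K : Set G) := by
    conv_lhs => rw [← h1]
    ext x
    constructor
    · rintro ⟨y, ⟨g, hg, rfl⟩, rfl⟩
      rwa [a_inv_cancel]
    · intro hx
      exact ⟨a t x, Set.mem_image_of_mem _ hx, a_inv_cancel t x⟩
  have hk1 : a t⁻¹ k ∈ (K : Set G) := h3 ▸ Set.mem_image_of_mem _ hk
  have hk2 : a (h * t) (a t⁻¹ k) ∈ (K : Set G) := h2 ▸ Set.mem_image_of_mem _ hk1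
  have hk3 : a h k = a (h * t) (a t⁻¹ k) := by
    rw [← a_comp]
    congr 1
    group
  refine ⟨a h k, by rw [hk3]; exact hk2, hψa h k⟩
end

section
/- Let G and H be non-abelian Polish groups, let ψ : G → H be a normal compression, and let A be a group acting on G and on H by group automorphisms that are homeomorphisms, such that ψ is A-equivariant (ψ(a•g) = a•ψ(g) for all a ∈ A, g ∈ G). If G is A-simple, then every closed normal A-invariant subgroup L of H with L ≠ H is contained in the center of H; in particular H/Z(H) has no proper nontrivial closed normal A-invariant subgroup. -/
/-- Let `G` and `H` be non-abelian Polish groups, let `ψ : G → H` be a normal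
compression, and let `A` be a group acting on `G` and on `H` by group automorphisms that are
homeomorphisms, such that `ψ` is `A`-equivariant. If `G` is `A`-simple, then every closed
normal `A`-invariant subgroup `L` of `H` with `L ≠ H` is contained in the center of `H`. -/
theorem stmt_6 {G H A : Type*}
    [Group G] [TopologicalSpace G] [IsTopologicalGroup G] [PolishSpace G]
    [Group H] [TopologicalSpace H] [IsTopologicalGroup H] [PolishSpace H]
    [Group A] [MulDistribMulAction A G] [MulDistribMulAction A H]
    (hGna : ∃ a b : G, a * b ≠ b * a) (hHna : ∃ a b : H, a * b ≠ b * a)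
    (hAG : ∀ a : A, Continuous fun g : G => a • g)
    (hAH : ∀ a : A, Continuous fun h : H => a • h)
    (ψ : G →* H) (hψc : Continuous ψ) (hψi : Function.Injective ψ)
    (hdense : DenseRange (⇑ψ)) (hnorm : ψ.range.Normal)
    (hequiv : ∀ (a : A) (g : G), ψ (a • g) = a • ψ g)
    (hGsimple : ∀ N : Subgroup G, N.Normal → IsClosed (N : Set G) →
      (∀ (a : A), ∀ n ∈ N, a • n ∈ N) → N = ⊥ ∨ N = ⊤) :
    ∀ L : Subgroup H, L.Normal → IsClosed (L : Set H) →
      (∀ (a : A), ∀ l ∈ L, a • l ∈ L) → L ≠ ⊤ → L ≤ Subgroup.center H := by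
  intro L hLnorm hLclosed hLinv hLne
  -- The pullback of L is a closed normal A-invariant subgroup of G
  have hN := hGsimple (L.comap ψ) (hLnorm.comap ψ) (hLclosed.preimage hψc)
    (fun a n hn => by
      simp only [Subgroup.mem_comap] at hn ⊢
      rw [hequiv]
      exact hLinv a _ hn)
  have hNbot : L.comap ψ = ⊥ := by
    rcases hN with h | h
    · exact h
    · exfalso
      apply hLne
      rw [Subgroup.eq_top_iff']
      intro x
      have hsub : Set.range ψ ⊆ (L : Set H) := by
        rintro _ ⟨g, rfl⟩
        exact (Subgroup.mem_comap).mp (by rw [h]; trivial)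
      have : closure (Set.range ψ) ⊆ (L : Set H) := closure_minimal hsub hLclosed
      exact this (by rw [hdense.closure_range]; trivial)
  -- Elements of L commute with elements of the range of ψ
  have hcomm : ∀ x ∈ L, ∀ g : G, ψ g * x = x * ψ g := by
    intro x hx g
    have hcL : ψ g * x * (ψ g)⁻¹ * x⁻¹ ∈ L :=
      L.mul_mem (hLnorm.conj_mem x hx (ψ g)) (L.inv_mem hx)
    have hcR : ψ g * x * (ψ g)⁻¹ * x⁻¹ ∈ ψ.range := by
      have h1 : (ψ g)⁻¹ ∈ ψ.range := ψ.range.inv_mem ⟨g, rfl⟩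
      have h2 : x * (ψ g)⁻¹ * x⁻¹ ∈ ψ.range := hnorm.conj_mem _ h1 x
      have h3 : ψ g * (x * (ψ g)⁻¹ * x⁻¹) ∈ ψ.range := ψ.range.mul_mem ⟨g, rfl⟩ h2
      convert h3 using 1
      group
    obtain ⟨g', hg'⟩ := hcR
    have hg'1 : g' = 1 := by
      have : g' ∈ L.comap ψ := Subgroup.mem_comap.mpr (hg' ▸ hcL)
      rwa [hNbot, Subgroup.mem_bot] at this
    have hone : ψ g * x * (ψ g)⁻¹ * x⁻¹ = 1 := by
      rw [← hg', hg'1, map_one]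
    have := mul_inv_eq_one.mp hone
    exact mul_inv_eq_iff_eq_mul.mp this
  -- Conclude by density
  intro x hx
  rw [Subgroup.mem_center_iff]
  intro h
  have hS : IsClosed {h : H | h * x = x * h} :=
    isClosed_eq (continuous_id.mul continuous_const) (continuous_const.mul continuous_id)
  have hsub : Set.range ψ ⊆ {h : H | h * x = x * h} := by
    rintro _ ⟨g, rfl⟩
    exact hcomm x hx g
  have : closure (Set.range ψ) ⊆ {h : H | h * x = x * h} := closure_minimal hsub hS
  exact this (by rw [hdense.closure_range]; trivial)
end

section
/- Let G and H be non-abelian Polish groups, let ψ : G → H be a normal compression, and let A be a group acting on G and on H by group automorphisms that are homeomorphisms, such that ψ is A-equivariant (ψ(a•g) = a•ψ(g) for all a ∈ A, g ∈ G). If H is A-simple, then the topological closure D of the commutator subgroup [G,G] is nontrivial, and every nontrivial closed normal A-invariant subgroup K of G contains D; in particular D is the unique smallest nontrivial closed normal A-invariant subgroup of G. -/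
open Filter Set Topology TopologicalSpace
open scoped commutatorElement

theorem Set.mem_def {α : Type*} {a : α} {s : Set α} : a ∈ s ↔ s a := Iff.rfl

section BaireLemmas

variable {α : Type*} [TopologicalSpace α]

/-- A set residually equal to the empty set is meager. -/
lemma isMeagre_of_residualEq_empty {B : Set α} (h : B =ᶠ[residual α] (∅ : Set α)) :
    IsMeagre B := by
  have : ∀ᶠ x in residual α, x ∈ Bᶜ := by
    filter_upwards [h] with x hx
    intro hxB
    rw [Set.mem_def] at hxB
    rw [show B x = (∅ : Set α) x from hx] at hxB
    exact hxB
  exact this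

/-- In a Baire space, a nonempty open set is not meager. -/
lemma not_isMeagre_of_isOpen'_s7 [BaireSpace α] {U : Set α} (hU : IsOpen U) (hne : U.Nonempty) :
    ¬ IsMeagre U := by
  intro h
  have hd : Dense Uᶜ := dense_of_mem_residual h
  obtain ⟨y, hyU, hyC⟩ := hd.inter_open_nonempty U hU hne
  exact hyC hyU

/-- Preimages of residual sets under homeomorphism-like maps (left translations). -/
lemma residual_preimage_homeo {β : Type*} [TopologicalSpace β] (e : α ≃ₜ β) {C : Set β}
    (hC : C ∈ residual β) : (⇑e) ⁻¹' C ∈ residual α := by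
  have h1 := e.residual_map_eq
  have h2 : C ∈ Filter.map (⇑e) (residual α) := h1.symm ▸ hC
  exact Filter.mem_map.mp h2

end BaireLemmas

section Pettis

variable {α : Type*} [TopologicalSpace α] [Group α] [IsTopologicalGroup α] [BaireSpace α]

/-- Pettis' lemma: if `B` is a non-meager Baire measurable set in a topological group which
is a Baire space, then for all `g` in a neighborhood of `1`, `g • B` meets `B`. -/
lemma pettis_lemma {B : Set α} (hB : BaireMeasurableSet B) (hnm : ¬ IsMeagre B) :
    {g : α | ((fun x => g * x) '' B ∩ B).Nonempty} ∈ 𝓝 (1 : α) := by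
  obtain ⟨U, hUo, hBU⟩ := hB.residualEq_isOpen
  have hUne : U.Nonempty := by
    rcases U.eq_empty_or_nonempty with h | h
    · exact absurd (isMeagre_of_residualEq_empty (h ▸ hBU)) hnm
    · exact h
  obtain ⟨u₀, hu₀⟩ := hUne
  have hVmem : {g : α | g * u₀ ∈ U} ∈ 𝓝 (1 : α) := by
    have hcont : Continuous fun g : α => g * u₀ := continuous_id.mul continuous_const
    have : (1 : α) ∈ {g : α | g * u₀ ∈ U} := by simpa using hu₀
    exact (hUo.preimage hcont).mem_nhds this
  refine mem_of_superset hVmem ?_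
  intro g hg
  have hgu₀ : g * u₀ ∈ U := hg
  -- the residual set where B and U agree
  have hR : {x | B x = U x} ∈ residual α := hBU
  set R := {x | B x = U x} with hRdef
  -- translated copies
  have htrans : ∀ S : Set α, S ∈ residual α → (fun x => g * x) '' S ∈ residual α := by
    intro S hS
    rw [Set.image_mul_left]
    exact residual_preimage_homeo (Homeomorph.mulLeft g⁻¹) hS
  have hT : R ∩ (fun x => g * x) '' R ∈ residual α := inter_mem hR (htrans R hR)
  have hgUopen : IsOpen ((fun x => g * x) '' U) := by
    rw [Set.image_mul_left]
    exact hUo.preimage (continuous_const.mul continuous_id)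
  have hWo : IsOpen (U ∩ (fun x => g * x) '' U) := hUo.inter hgUopen
  have hWne : (U ∩ (fun x => g * x) '' U).Nonempty := ⟨g * u₀, hgu₀, ⟨u₀, hu₀, rfl⟩⟩
  obtain ⟨x, hxW, hxT⟩ :=
    (dense_of_mem_residual hT).inter_open_nonempty _ hWo hWne
  obtain ⟨hxU, hxgU⟩ := hxW
  obtain ⟨hxR, hxgR⟩ := hxT
  -- x ∈ B
  have hxB : x ∈ B := by
    have : B x = U x := hxR
    rw [Set.mem_def, this]
    exact hxU
  -- x ∈ g '' B
  obtain ⟨u, huU, hux⟩ := hxgU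
  obtain ⟨r, hrR, hrx⟩ := hxgR
  have hru : r = u := by
    have := hrx.trans hux.symm
    exact mul_left_cancel this
  have hrB : r ∈ B := by
    have h1 : B r = U r := hrR
    rw [Set.mem_def, h1, hru]
    exact huU
  exact ⟨x, ⟨r, hrB, hrx⟩, hxB⟩

/-- Pettis' theorem: a measurable homomorphism from a Baire topological group to a
separable topological group is continuous. -/
lemma pettis_theorem {G₁ G₂ : Type*} [Group G₁] [TopologicalSpace G₁] [IsTopologicalGroup G₁]
    [BaireSpace G₁] [MeasurableSpace G₁] [BorelSpace G₁]
    [Group G₂] [TopologicalSpace G₂] [IsTopologicalGroup G₂] [SeparableSpace G₂]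
    (f : G₁ →* G₂) (hf : ∀ s : Set G₂, IsOpen s → MeasurableSet (⇑f ⁻¹' s)) :
    Continuous f := by
  apply continuous_of_continuousAt_one f
  have hmapone : f 1 = 1 := map_one f
  rw [ContinuousAt, hmapone]
  intro V hV
  rw [Filter.mem_map]
  obtain ⟨W, hW, hWV⟩ := exists_nhds_split_inv hV
  set W' := interior W with hW'def
  have hW'o : IsOpen W' := isOpen_interior
  have hW'1 : (1 : G₂) ∈ W' := mem_interior_iff_mem_nhds.mpr hW
  obtain ⟨D, hDc, hDd⟩ := TopologicalSpace.exists_countable_dense G₂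
  -- the sets covering G₁
  set S : G₂ → Set G₁ := fun d => f ⁻¹' ((fun y => y * d⁻¹) ⁻¹' W') with hSdef
  have hScover : ∀ x : G₁, ∃ d ∈ D, x ∈ S d := by
    intro x
    have hopen : IsOpen ((fun d : G₂ => f x * d⁻¹) ⁻¹' W') :=
      hW'o.preimage (continuous_const.mul continuous_inv)
    have hne : ((fun d : G₂ => f x * d⁻¹) ⁻¹' W').Nonempty := ⟨f x, by simpa using hW'1⟩
    obtain ⟨d, hdD, hd⟩ := hDd.inter_open_nonempty _ hopen hne
    exact ⟨d, hd, hdD⟩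
  have hSmeas : ∀ d : G₂, MeasurableSet (S d) :=
    fun d => hf _ (hW'o.preimage (continuous_id.mul continuous_const))
  -- some piece is non-meager
  have hexists : ∃ d ∈ D, ¬ IsMeagre (S d) := by
    by_contra hcon
    push_neg at hcon
    have hmeager : IsMeagre (⋃ d ∈ D, S d) := by
      rw [IsMeagre, Set.compl_iUnion₂]
      exact (countable_bInter_mem hDc).mpr fun d hd => hcon d hd
    have huniv : (Set.univ : Set G₁) ⊆ ⋃ d ∈ D, S d := by
      intro x _
      obtain ⟨d, hdD, hdx⟩ := hScover x
      exact Set.mem_biUnion hdD hdx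
    have : IsMeagre (Set.univ : Set G₁) := hmeager.mono huniv
    have hne : Nonempty G₁ := ⟨1⟩
    have hd : Dense ((Set.univ : Set G₁)ᶜ) := dense_of_mem_residual this
    rw [Set.compl_univ] at hd
    exact Set.not_nonempty_empty hd.nonempty
  obtain ⟨d, hdD, hdnm⟩ := hexists
  have hBmeas : BaireMeasurableSet (S d) := (hSmeas d).baireMeasurableSet
  have hnhds := pettis_lemma hBmeas hdnm
  refine mem_of_superset hnhds ?_
  rintro g ⟨x, ⟨b, hbB, hbx⟩, hxB⟩
  -- x = g * b with x, b ∈ S d; so g = x * b⁻¹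
  have hgeq : g = x * b⁻¹ := by rw [← hbx]; group
  have hx' : f x * d⁻¹ ∈ W' := hxB
  have hb' : f b * d⁻¹ ∈ W' := hbB
  have : f g ∈ V := by
    rw [hgeq, map_mul, map_inv]
    have := hWV _ (interior_subset hx') _ (interior_subset hb')
    have heq : f x * d⁻¹ / (f b * d⁻¹) = f x * (f b)⁻¹ := by
      rw [div_eq_mul_inv, mul_inv_rev, inv_inv, mul_assoc,
        ← mul_assoc d⁻¹ d ((f b)⁻¹), inv_mul_cancel, one_mul]
    rw [heq] at this
    exact this
  exact this

end Pettis

section ComeagerContinuity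

/-- A function whose open-set preimages are Baire measurable is continuous on a residual set. -/
lemma exists_residual_continuousOn {α β : Type*} [TopologicalSpace α] [TopologicalSpace β]
    [SecondCountableTopology β] {f : α → β}
    (hf : ∀ s : Set β, IsOpen s → BaireMeasurableSet (f ⁻¹' s)) :
    ∃ C : Set α, C ∈ residual α ∧ ContinuousOn f C := by
  obtain ⟨b, hbc, -, hbb⟩ := TopologicalSpace.exists_countable_basis β
  have hch : ∀ s ∈ b, ∃ U : Set α, IsOpen U ∧ f ⁻¹' s =ᶠ[residual α] U := by
    intro s hs
    obtain ⟨U, hU, h⟩ := (hf s (hbb.isOpen hs)).residualEq_isOpen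
    exact ⟨U, hU, h⟩
  choose U hUo hUe using hch
  refine ⟨⋂ (s : Set β) (hs : s ∈ b), {x | (f ⁻¹' s) x = (U s hs) x}, ?_, ?_⟩
  · exact (countable_bInter_mem hbc).mpr fun s hs => hUe s hs
  · intro x hx
    rw [ContinuousWithinAt, hbb.nhds_hasBasis.tendsto_right_iff]
    rintro s ⟨hsb, hfxs⟩
    have hxeq : (f ⁻¹' s) x = (U s hsb) x := by
      have := Set.mem_iInter₂.mp hx s hsb
      exact this
    have hxU : x ∈ U s hsb := by
      rw [Set.mem_def, ← hxeq]
      exact hfxs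
    have hmem : U s hsb ∈ 𝓝[⋂ (s : Set β) (hs : s ∈ b), {x | (f ⁻¹' s) x = (U s hs) x}] x :=
      mem_nhdsWithin_of_mem_nhds ((hUo s hsb).mem_nhds hxU)
    filter_upwards [hmem, self_mem_nhdsWithin] with y hyU hyC
    have hyeq : (f ⁻¹' s) y = (U s hsb) y := Set.mem_iInter₂.mp hyC s hsb
    show y ∈ f ⁻¹' s
    rw [Set.mem_def]
    rw [show (f ⁻¹' s) y = (U s hsb) y from hyeq]
    exact hyU

end ComeagerContinuity

/-- Let `G` and `H` be non-abelian Polish groups, let `ψ : G → H` be a normal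
compression, and let `A` be a group acting on `G` and on `H` by group automorphisms that are
homeomorphisms, such that `ψ` is `A`-equivariant. If `H` is `A`-simple, then the topological
closure `D` of the commutator subgroup `[G,G]` is nontrivial, and every nontrivial closed
normal `A`-invariant subgroup `K` of `G` contains `D`. -/
theorem stmt_7 {G H A : Type*}
    [Group G] [TopologicalSpace G] [IsTopologicalGroup G] [PolishSpace G]
    [Group H] [TopologicalSpace H] [IsTopologicalGroup H] [PolishSpace H]
    [Group A] [MulDistribMulAction A G] [MulDistribMulAction A H]
    (hGna : ∃ a b : G, a * b ≠ b * a) (hHna : ∃ a b : H, a * b ≠ b * a)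
    (hAG : ∀ a : A, Continuous fun g : G => a • g)
    (hAH : ∀ a : A, Continuous fun h : H => a • h)
    (ψ : G →* H) (hψc : Continuous ψ) (hψi : Function.Injective ψ)
    (hdense : DenseRange (⇑ψ)) (hnorm : ψ.range.Normal)
    (hequiv : ∀ (a : A) (g : G), ψ (a • g) = a • ψ g)
    (hHsimple : ∀ N : Subgroup H, N.Normal → IsClosed (N : Set H) →
      (∀ (a : A), ∀ n ∈ N, a • n ∈ N) → N = ⊥ ∨ N = ⊤) :
    (commutator G).topologicalClosure ≠ ⊥ ∧
      ∀ K : Subgroup G, K ≠ ⊥ → K.Normal → IsClosed (K : Set G) →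
        (∀ (a : A), ∀ k ∈ K, a • k ∈ K) →
        (commutator G).topologicalClosure ≤ K := by
  constructor
  · -- nontriviality of the closure of the commutator subgroup
    obtain ⟨a, b, hab⟩ := hGna
    intro hbot
    have h1 : ⁅a, b⁆ ∈ commutator G :=
      Subgroup.commutator_mem_commutator (Subgroup.mem_top a) (Subgroup.mem_top b)
    have h2 := Subgroup.le_topologicalClosure (commutator G) h1
    rw [hbot, Subgroup.mem_bot] at h2
    exact hab (commutatorElement_eq_one_iff_mul_comm.mp h2)
  · intro K hKbot hKn hKc hKA
    -- Step 1: the closure of `ψ(K)` is a closed normal A-invariant subgroup of H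
    set N := (K.map ψ).topologicalClosure with hNdef
    have hNset : (N : Set H) = closure (⇑ψ '' (K : Set G)) := by
      rw [hNdef, Subgroup.topologicalClosure_coe, Subgroup.coe_map]
    have hNclosed : IsClosed (N : Set H) := Subgroup.isClosed_topologicalClosure _
    -- conjugates of elements of ψ(K) by arbitrary elements of H lie in N
    have hconj : ∀ (h : H) (k : G), k ∈ K → h * ψ k * h⁻¹ ∈ (N : Set H) := by
      intro h k hk
      have hcont : Continuous fun z : H => z * ψ k * z⁻¹ :=
        (continuous_id.mul continuous_const).mul continuous_inv
      have hsub : Set.range ψ ⊆ (fun z : H => z * ψ k * z⁻¹) ⁻¹' (N : Set H) := by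
        rintro _ ⟨g, rfl⟩
        show ψ g * ψ k * (ψ g)⁻¹ ∈ (N : Set H)
        rw [hNset]
        refine subset_closure ⟨g * k * g⁻¹, hKn.conj_mem k hk g, ?_⟩
        rw [map_mul, map_mul, map_inv]
      have hclosed : IsClosed ((fun z : H => z * ψ k * z⁻¹) ⁻¹' (N : Set H)) :=
        hNclosed.preimage hcont
      have := closure_minimal hsub hclosed
      exact this (hdense h)
    have hNnormal : N.Normal := by
      constructor
      intro n hn h
      have hnset : n ∈ closure (⇑ψ '' (K : Set G)) := by rw [← hNset]; exact hn
      have hcont : Continuous fun z : H => h * z * h⁻¹ :=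
        (continuous_const.mul continuous_id).mul continuous_const
      have hsub : ⇑ψ '' (K : Set G) ⊆ (fun z : H => h * z * h⁻¹) ⁻¹' (N : Set H) := by
        rintro _ ⟨k, hk, rfl⟩
        exact hconj h k hk
      have := closure_minimal hsub (hNclosed.preimage hcont)
      exact this hnset
    have hNA : ∀ a : A, ∀ n ∈ N, a • n ∈ N := by
      intro a n hn
      have hnset : n ∈ closure (⇑ψ '' (K : Set G)) := by rw [← hNset]; exact hn
      have hsub : ⇑ψ '' (K : Set G) ⊆ (fun z : H => a • z) ⁻¹' (N : Set H) := by
        rintro _ ⟨k, hk, rfl⟩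
        show a • ψ k ∈ (N : Set H)
        rw [← hequiv, hNset]
        exact subset_closure ⟨a • k, hKA a k hk, rfl⟩
      have := closure_minimal hsub (hNclosed.preimage (hAH a))
      exact this hnset
    -- N is nontrivial
    have hKelem : ∃ k ∈ K, k ≠ (1 : G) := by
      by_contra hcon
      push_neg at hcon
      exact hKbot ((Subgroup.eq_bot_iff_forall K).mpr hcon)
    obtain ⟨k₀, hk₀K, hk₀⟩ := hKelem
    have hNne : N ≠ ⊥ := by
      intro hNbot
      have h1 : ψ k₀ ∈ N :=
        Subgroup.le_topologicalClosure (K.map ψ) ⟨k₀, hk₀K, rfl⟩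
      rw [hNbot, Subgroup.mem_bot] at h1
      exact hk₀ (hψi (by rw [h1, map_one]))
    have hNtop : N = ⊤ := by
      rcases hHsimple N hNnormal hNclosed hNA with h | h
      · exact absurd h hNne
      · exact h
    -- so ψ(K) is dense in H
    have hdK : Dense (⇑ψ '' (K : Set G)) := by
      rw [dense_iff_closure_eq, ← hNset, hNtop, Subgroup.coe_top]
    -- Step 2: the main Baire category argument: every commutator of G lies in K
    letI := upgradeIsCompletelyMetrizable G
    letI := upgradeIsCompletelyMetrizable H
    borelize G H
    have hψemb : MeasurableEmbedding ⇑ψ := hψc.measurableEmbedding hψi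
    -- the conjugation maps Φ h : G → G
    have hmemrange : ∀ (h : H) (x : G), h * ψ x * h⁻¹ ∈ ψ.range :=
      fun h x => hnorm.conj_mem _ ⟨x, rfl⟩ h
    set Φ : H → G → G := fun h x => Function.invFun ⇑ψ (h * ψ x * h⁻¹) with hΦdef
    have hΦspec : ∀ (h : H) (x : G), ψ (Φ h x) = h * ψ x * h⁻¹ := by
      intro h x
      obtain ⟨y, hy⟩ := hmemrange h x
      exact Function.invFun_eq ⟨y, hy⟩
    have hΦmul : ∀ (h : H) (x y : G), Φ h (x * y) = Φ h x * Φ h y := by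
      intro h x y
      apply hψi
      rw [map_mul, hΦspec, hΦspec, hΦspec, map_mul]
      group
    have hΦinv : ∀ (h : H) (x : G), Φ h⁻¹ (Φ h x) = x := by
      intro h x
      apply hψi
      rw [hΦspec, hΦspec]
      group
    have hΦmeas : ∀ h : H, Measurable (Φ h) := by
      intro h
      intro S hS
      have heq : Φ h ⁻¹' S = (fun x : G => h * ψ x * h⁻¹) ⁻¹' (⇑ψ '' S) := by
        ext x
        constructor
        · intro hx
          exact ⟨Φ h x, hx, hΦspec h x⟩
        · rintro ⟨y, hyS, hy⟩
          have : Φ h x = y := hψi (by rw [hΦspec, hy])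
          show Φ h x ∈ S
          rw [this]
          exact hyS
      rw [heq]
      exact (((continuous_const.mul hψc).mul continuous_const).measurable)
        (hψemb.measurableSet_image.mpr hS)
    have hΦcont : ∀ h : H, Continuous (Φ h) := by
      intro h
      exact pettis_theorem (MonoidHom.mk' (Φ h) (hΦmul h))
        (fun s hs => hΦmeas h hs.measurableSet)
    -- every commutator lies in K
    have hcommK : ∀ a b : G, ⁅a, b⁆ ∈ K := by
      intro a b
      -- the map w : H → G, h ↦ Φ h b
      set w : H → G := fun h => Φ h b with hwdef
      have hwmeas : Measurable w := by
        intro S hS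
        have heq : w ⁻¹' S = (fun h : H => h * ψ b * h⁻¹) ⁻¹' (⇑ψ '' S) := by
          ext h
          constructor
          · intro hx
            exact ⟨Φ h b, hx, hΦspec h b⟩
          · rintro ⟨y, hyS, hy⟩
            have : Φ h b = y := hψi (by rw [hΦspec, hy])
            show Φ h b ∈ S
            rw [this]
            exact hyS
        rw [heq]
        exact (((continuous_id.mul continuous_const).mul continuous_inv).measurable)
          (hψemb.measurableSet_image.mpr hS)
      obtain ⟨C, hCres, hCcont⟩ := exists_residual_continuousOn
        (f := w) (fun s hs => (hwmeas hs.measurableSet).baireMeasurableSet)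
      -- a sequence in ψ(K) converging to ψ a
      have hmemcl : ψ a ∈ closure (⇑ψ '' (K : Set G)) := hdK _
      obtain ⟨u, humem, hutend⟩ := mem_closure_iff_seq_limit.mp hmemcl
      choose k hkK hψk using humem
      -- pick a generic c
      have hpre : ∀ y : H, (fun c : H => c * y) ⁻¹' C ∈ residual H := by
        intro y
        exact residual_preimage_homeo (Homeomorph.mulRight y) hCres
      have hres2 : ((⋂ n : ℕ, (fun c : H => c * u n) ⁻¹' C) ∩
          ((fun c : H => c * ψ a) ⁻¹' C)) ∩ C ∈ residual H :=
        inter_mem (inter_mem (countable_iInter_mem.mpr fun n => hpre (u n)) (hpre (ψ a))) hCres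
      have hHne : Nonempty H := ⟨1⟩
      obtain ⟨c, ⟨⟨hc1, hc2⟩, hc3⟩⟩ := (dense_of_mem_residual hres2).nonempty
      have hc1' : ∀ n : ℕ, c * u n ∈ C := fun n => Set.mem_iInter.mp hc1 n
      -- the sequence c * u n tends to c * ψ a within C
      have hseq : Tendsto (fun n => c * u n) atTop (𝓝[C] (c * ψ a)) := by
        rw [tendsto_nhdsWithin_iff]
        exact ⟨hutend.const_mul c, Filter.Eventually.of_forall hc1'⟩
      have hlim1 : Tendsto (fun n => w (c * u n)) atTop (𝓝 (w (c * ψ a))) :=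
        Filter.Tendsto.comp (hCcont _ hc2) hseq
      -- identify the values of w
      have hw1 : ∀ n : ℕ, w (c * u n) = Φ c (k n * b * (k n)⁻¹) := by
        intro n
        apply hψi
        rw [hΦspec, hΦspec, map_mul, map_mul, map_inv, hψk]
        group
      have hw2 : w (c * ψ a) = Φ c (a * b * a⁻¹) := by
        apply hψi
        rw [hΦspec, hΦspec, map_mul, map_mul, map_inv]
        group
      have hlim2 : Tendsto (fun n => Φ c (k n * b * (k n)⁻¹)) atTop
          (𝓝 (Φ c (a * b * a⁻¹))) := by
        rw [← hw2]
        exact hlim1.congr fun n => hw1 n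
      have hlim3 : Tendsto (fun n => k n * b * (k n)⁻¹) atTop (𝓝 (a * b * a⁻¹)) := by
        have := Filter.Tendsto.comp ((hΦcont c⁻¹).tendsto (Φ c (a * b * a⁻¹))) hlim2
        have heq1 : (fun n => Φ c⁻¹ (Φ c (k n * b * (k n)⁻¹))) =
            fun n => k n * b * (k n)⁻¹ := funext fun n => hΦinv c _
        rw [Function.comp_def, heq1, hΦinv c _] at this
        exact this
      have hlim4 : Tendsto (fun n => k n * b * (k n)⁻¹ * b⁻¹) atTop
          (𝓝 (a * b * a⁻¹ * b⁻¹)) := hlim3.mul_const b⁻¹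
      have hmemK : ∀ n : ℕ, k n * b * (k n)⁻¹ * b⁻¹ ∈ K := by
        intro n
        have h1 : b * (k n)⁻¹ * b⁻¹ ∈ K := hKn.conj_mem _ (K.inv_mem (hkK n)) b
        have h2 : k n * (b * (k n)⁻¹ * b⁻¹) ∈ K := K.mul_mem (hkK n) h1
        have heq : k n * b * (k n)⁻¹ * b⁻¹ = k n * (b * (k n)⁻¹ * b⁻¹) := by group
        rw [heq]
        exact h2
      have : a * b * a⁻¹ * b⁻¹ ∈ (K : Set G) :=
        hKc.mem_of_tendsto hlim4 (Filter.Eventually.of_forall hmemK)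
      rw [commutatorElement_def]
      exact this
    have hcomm : commutator G ≤ K := by
      rw [commutator_def]
      exact Subgroup.commutator_le.mpr fun g₁ _ g₂ _ => hcommK g₁ g₂
    exact Subgroup.topologicalClosure_minimal (commutator G) hcomm hKc
end

section
/- Let K be a topological group and let G and H be subgroups of K. If the underlying set of G is connected, then the underlying set of the commutator subgroup [G,H] (the subgroup generated by all commutators [g,h] with g ∈ G, h ∈ H) is connected. -/
open scoped commutatorElement

/-- Let `K` be a topological group and let `G` and `H` be subgroups of `K`.
If the underlying set of `G` is connected, then the underlying set of the commutator
subgroup `[G,H]` is connected. -/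
theorem stmt_8 {K : Type*} [Group K] [TopologicalSpace K] [IsTopologicalGroup K]
    (G H : Subgroup K) (hG : IsConnected (G : Set K)) :
    IsConnected ((⁅G, H⁆ : Subgroup K) : Set K) := by
  have key : ∀ x ∈ ⁅G, H⁆, ∃ C : Set K,
      IsConnected C ∧ C ⊆ ((⁅G, H⁆ : Subgroup K) : Set K) ∧ (1 : K) ∈ C ∧ x ∈ C := by
    intro x hx
    rw [Subgroup.commutator_def] at hx
    induction hx using Subgroup.closure_induction with
    | mem y hy =>
      obtain ⟨g, hg, h, hh, rfl⟩ := hy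
      refine ⟨(fun g' : K => ⁅g', h⁆) '' (G : Set K), ?_, ?_, ?_, ?_⟩
      · exact hG.image _ (Continuous.continuousOn (by simp only [commutatorElement_def]; fun_prop))
      · rintro _ ⟨g', hg', rfl⟩
        exact Subgroup.commutator_mem_commutator hg' hh
      · exact ⟨1, G.one_mem, by simp⟩
      · exact ⟨g, hg, rfl⟩
    | one => exact ⟨{1}, isConnected_singleton, by simp [Subgroup.one_mem], rfl, rfl⟩
    | mul a b ha hb iha ihb =>
      obtain ⟨C₁, hC₁, hC₁sub, h1₁, hx₁⟩ := iha
      obtain ⟨C₂, hC₂, hC₂sub, h1₂, hx₂⟩ := ihb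
      refine ⟨(fun p : K × K => p.1 * p.2) '' (C₁ ×ˢ C₂), ?_, ?_, ?_, ?_⟩
      · exact (hC₁.prod hC₂).image _ (Continuous.continuousOn (by fun_prop))
      · rintro _ ⟨⟨c₁, c₂⟩, ⟨hc₁, hc₂⟩, rfl⟩
        exact Subgroup.mul_mem _ (hC₁sub hc₁) (hC₂sub hc₂)
      · exact ⟨(1, 1), ⟨h1₁, h1₂⟩, by simp⟩
      · exact ⟨(a, b), ⟨hx₁, hx₂⟩, rfl⟩
    | inv a ha iha =>
      obtain ⟨C, hC, hCsub, h1, hx⟩ := iha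
      refine ⟨(fun z => z⁻¹) '' C, ?_, ?_, ⟨1, h1, by simp⟩, ⟨a, hx, rfl⟩⟩
      · exact hC.image _ (Continuous.continuousOn (by fun_prop))
      · rintro _ ⟨c, hc, rfl⟩
        exact Subgroup.inv_mem _ (hCsub hc)
  choose C hCconn hCsub hC1 hCx using key
  refine ⟨⟨1, Subgroup.one_mem _⟩, ?_⟩
  have heq : ((⁅G, H⁆ : Subgroup K) : Set K)
      = ⋃ x : ((⁅G, H⁆ : Subgroup K) : Set K), C x.1 x.2 := by
    apply Set.Subset.antisymm
    · intro y hy; exact Set.mem_iUnion.mpr ⟨⟨y, hy⟩, hCx y hy⟩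
    · exact Set.iUnion_subset fun x => hCsub x.1 x.2
  rw [heq]
  exact isPreconnected_iUnion ⟨1, Set.mem_iInter.mpr fun x => hC1 x.1 x.2⟩ (fun x => (hCconn x.1 x.2).isPreconnected)
end

section
/- Let G and H be Polish groups and let ψ : G → H be a normal compression. If G is totally disconnected (the connected component of the identity of G is trivial), then the connected component of the identity of H is central in H: every element of the connected component of 1 in H commutes with every element of H. -/
open Filter Topology Set

/-- A function whose preimages of open sets are Baire measurable is continuous on a
comeager set. -/
theorem aux_exists_residual_continuousOn {X Y : Type*} [TopologicalSpace X] [TopologicalSpace Y]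
    [SecondCountableTopology Y] {f : X → Y}
    (hf : ∀ s : Set Y, IsOpen s → BaireMeasurableSet (f ⁻¹' s)) :
    ∃ E ∈ residual X, ContinuousOn f E := by
  obtain ⟨b, hbc, -, hb⟩ := TopologicalSpace.exists_countable_basis Y
  haveI := hbc.to_subtype
  choose U hUopen hUeq using fun s : b => (hf s (hb.isOpen s.2)).residualEq_isOpen
  have hmem : ∀ᶠ x in residual X, ∀ s : b, x ∈ f ⁻¹' (s : Set Y) ↔ x ∈ U s := by
    rw [eventually_countable_forall]
    intro s
    exact Filter.eventuallyEq_set.mp (hUeq s)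
  refine ⟨{x | ∀ s : b, x ∈ f ⁻¹' (s : Set Y) ↔ x ∈ U s}, hmem, ?_⟩
  intro x hx
  have : ∀ V ∈ 𝓝 (f x),
      f ⁻¹' V ∈ 𝓝[{x | ∀ s : b, x ∈ f ⁻¹' (s : Set Y) ↔ x ∈ U s}] x := by
    intro V hV
    obtain ⟨s, hsb, hfxs, hsV⟩ := hb.mem_nhds_iff.mp hV
    have hxU : x ∈ U ⟨s, hsb⟩ := (hx ⟨s, hsb⟩).mp hfxs
    refine Filter.mem_of_superset
      (Filter.inter_mem (mem_nhdsWithin_of_mem_nhds ((hUopen ⟨s, hsb⟩).mem_nhds hxU))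
        self_mem_nhdsWithin) ?_
    rintro y ⟨hyU, hyE⟩
    exact hsV ((hyE ⟨s, hsb⟩).mpr hyU)
  exact Filter.tendsto_def.mpr this

/-- Pettis-style: a cocycle map which is continuous on a comeager set tends to its value
at `1` along sequences tending to `1`. -/
theorem aux_tendsto_one {H G : Type*} [Group H] [TopologicalSpace H] [IsTopologicalGroup H]
    [BaireSpace H] [TopologicalSpace G]
    {φ : H → G} {A : H → G → G}
    (hA : ∀ a, Continuous (A a))
    (hcoc : ∀ a h, φ (a * h) = A a (φ h))
    (hinv : ∀ a x, A a⁻¹ (A a x) = x)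
    (hE : ∃ E ∈ residual H, ContinuousOn φ E)
    {t : ℕ → H} (ht : Filter.Tendsto t Filter.atTop (𝓝 1)) :
    Filter.Tendsto (fun n => φ (t n)) Filter.atTop (𝓝 (φ 1)) := by
  obtain ⟨E, hEres, hEcont⟩ := hE
  have hS : ∀ n : ℕ, (fun b => b * t n) ⁻¹' E ∈ residual H := by
    intro n
    have h1 : E ∈ Filter.map (Homeomorph.mulRight (t n)) (residual H) := by
      rw [Homeomorph.residual_map_eq]; exact hEres
    exact Filter.mem_map.mp h1
  have hbig : (E ∩ ⋂ n, (fun b => b * t n) ⁻¹' E) ∈ residual H :=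
    Filter.inter_mem hEres (countable_iInter_mem.mpr hS)
  haveI : Nonempty H := ⟨1⟩
  obtain ⟨a, haE, haI⟩ := (dense_of_mem_residual hbig).nonempty
  have haI' : ∀ n, a * t n ∈ E := fun n => Set.mem_iInter.mp haI n
  have hat : Filter.Tendsto (fun n => a * t n) Filter.atTop (𝓝[E] a) := by
    rw [tendsto_nhdsWithin_iff]
    constructor
    · simpa using Filter.Tendsto.const_mul a ht
    · exact Filter.Eventually.of_forall haI'
  have h2 : Filter.Tendsto (fun n => φ (a * t n)) Filter.atTop (𝓝 (φ a)) :=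
    Filter.Tendsto.comp (hEcont a haE) hat
  have h3 : Filter.Tendsto (fun n => A a⁻¹ (φ (a * t n))) Filter.atTop (𝓝 (A a⁻¹ (φ a))) :=
    Filter.Tendsto.comp ((hA a⁻¹).tendsto _) h2
  have h4 : (fun n => A a⁻¹ (φ (a * t n))) = fun n => φ (t n) := by
    funext n; rw [hcoc a (t n), hinv]
  have h5 : A a⁻¹ (φ a) = φ 1 := by
    rw [show φ a = A a (φ 1) by rw [← hcoc a 1, mul_one], hinv]
  rw [h4, h5] at h3
  exact h3

/-- Pettis-style continuity: a cocycle map continuous on a comeager set is continuous. -/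
theorem aux_continuous {H G : Type*} [Group H] [TopologicalSpace H] [IsTopologicalGroup H]
    [BaireSpace H] [SequentialSpace H] [TopologicalSpace G]
    {φ : H → G} {A : H → G → G}
    (hA : ∀ a, Continuous (A a))
    (hcoc : ∀ a h, φ (a * h) = A a (φ h))
    (hinv : ∀ a x, A a⁻¹ (A a x) = x)
    (hE : ∃ E ∈ residual H, ContinuousOn φ E) :
    Continuous φ := by
  rw [continuous_iff_seqContinuous]
  intro u x hu
  have ht : Filter.Tendsto (fun n => x⁻¹ * u n) Filter.atTop (𝓝 1) := by
    have := Filter.Tendsto.const_mul x⁻¹ hu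
    simpa using this
  have h1 := aux_tendsto_one hA hcoc hinv hE ht
  have h2 : Filter.Tendsto (fun n => A x (φ (x⁻¹ * u n))) Filter.atTop (𝓝 (A x (φ 1))) :=
    Filter.Tendsto.comp ((hA x).tendsto _) h1
  have e1 : (fun n => A x (φ (x⁻¹ * u n))) = fun n => φ (u n) := by
    funext n; rw [← hcoc]; congr 1; group
  have e2 : A x (φ 1) = φ x := by rw [← hcoc, mul_one]
  rw [e1, e2] at h2
  exact h2

/-- Let `G` and `H` be Polish groups and let `ψ : G → H` be a normal
compression. If `G` is totally disconnected (the connected component of the identity of `G`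
is trivial), then the connected component of the identity of `H` is central in `H`. -/
theorem stmt_9 {G H : Type*}
    [Group G] [TopologicalSpace G] [IsTopologicalGroup G] [PolishSpace G]
    [Group H] [TopologicalSpace H] [IsTopologicalGroup H] [PolishSpace H]
    (ψ : G →* H) (hψc : Continuous ψ) (hψi : Function.Injective ψ)
    (hdense : DenseRange (⇑ψ)) (hnorm : ψ.range.Normal)
    (htd : connectedComponent (1 : G) = {1}) :
    ∀ h ∈ connectedComponent (1 : H), ∀ h' : H, h * h' = h' * h := by
  letI := TopologicalSpace.upgradeIsCompletelyMetrizable G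
  letI := TopologicalSpace.upgradeIsCompletelyMetrizable H
  borelize G H
  have hψme : MeasurableEmbedding ψ := hψc.measurableEmbedding hψi
  have hex : ∀ (h : H) (g : G), ∃ x : G, ψ x = h * ψ g * h⁻¹ := by
    intro h g
    have hm : h * ψ g * h⁻¹ ∈ ψ.range := hnorm.conj_mem (ψ g) ⟨g, rfl⟩ h
    obtain ⟨x, hx⟩ := MonoidHom.mem_range.mp hm
    exact ⟨x, hx⟩
  choose Φ hΦ using hex
  have hΦ1 : ∀ g : G, Φ 1 g = g := fun g => hψi (by rw [hΦ]; group)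
  have hΦmul : ∀ a b g, Φ (a * b) g = Φ a (Φ b g) := fun a b g => hψi (by
    rw [hΦ, hΦ, hΦ]; group)
  have hΦhom : ∀ a x y, Φ a (x * y) = Φ a x * Φ a y := fun a x y => hψi (by
    rw [map_mul, hΦ, hΦ, hΦ, map_mul]; group)
  have hΦinvel : ∀ a x, Φ a x⁻¹ = (Φ a x)⁻¹ := fun a x => hψi (by
    rw [hΦ, map_inv, map_inv, hΦ]; group)
  have hΦinvpt : ∀ (a : H) (x : G), Φ a⁻¹ (Φ a x) = x := fun a x => by
    rw [← hΦmul]; simp [hΦ1]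
  have hcoH : ∀ {f : H → G}, Measurable f → ∃ E ∈ residual H, ContinuousOn f E :=
    fun {f} hf => aux_exists_residual_continuousOn
      (fun s hs => (hf hs.measurableSet).baireMeasurableSet)
  have hcoG : ∀ {f : G → G}, Measurable f → ∃ E ∈ residual G, ContinuousOn f E :=
    fun {f} hf => aux_exists_residual_continuousOn
      (fun s hs => (hf hs.measurableSet).baireMeasurableSet)
  have hmeas_pt : ∀ a : H, Measurable (Φ a) := by
    intro a
    apply hψme.measurable_comp_iff.mp
    have : (ψ ∘ Φ a) = fun x : G => a * ψ x * a⁻¹ := funext fun x => hΦ a x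
    rw [this]
    exact ((continuous_const.mul hψc).mul continuous_const).measurable
  have hmeas_orbit : ∀ g : G, Measurable fun h : H => Φ h g := by
    intro g
    apply hψme.measurable_comp_iff.mp
    have : (ψ ∘ fun h : H => Φ h g) = fun h : H => h * ψ g * h⁻¹ :=
      funext fun h => hΦ h g
    rw [this]
    exact ((continuous_id.mul continuous_const).mul continuous_inv).measurable
  have hAcont : ∀ a : H, Continuous (Φ a) := by
    intro a
    apply aux_continuous (A := fun x y => Φ a x * y)
    · exact fun x => continuous_const.mul continuous_id
    · exact fun x y => hΦhom a x y
    · intro x y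
      rw [hΦinvel, ← mul_assoc, inv_mul_cancel, one_mul]
    · exact hcoG (hmeas_pt a)
  have horb : ∀ g : G, Continuous fun h : H => Φ h g := by
    intro g
    apply aux_continuous (A := Φ)
    · exact hAcont
    · exact fun a h => hΦmul a h g
    · exact hΦinvpt
    · exact hcoH (hmeas_orbit g)
  have hcc : ∀ g : G, ∀ h ∈ connectedComponent (1 : H), Φ h g = g := by
    intro g h hh
    have h1 : Φ h g ∈ connectedComponent (Φ (1 : H) g) :=
      (horb g).image_connectedComponent_subset 1 ⟨h, hh, rfl⟩
    rw [hΦ1 g] at h1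
    have h2 : (fun x : G => g⁻¹ * x) '' connectedComponent g ⊆
        connectedComponent (g⁻¹ * g) :=
      (continuous_const.mul continuous_id).image_connectedComponent_subset g
    rw [inv_mul_cancel, htd] at h2
    have h3 : g⁻¹ * Φ h g ∈ ({1} : Set G) := h2 ⟨_, h1, rfl⟩
    have h4 : g⁻¹ * Φ h g = 1 := h3
    calc Φ h g = g * (g⁻¹ * Φ h g) := by group
    _ = g := by rw [h4, mul_one]
  have hcomm : ∀ g : G, ∀ h ∈ connectedComponent (1 : H), h * ψ g = ψ g * h := by
    intro g h hh
    have h1 := hΦ h g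
    rw [hcc g h hh] at h1
    have h2 : h * ψ g * h⁻¹ = ψ g := h1.symm
    calc h * ψ g = (h * ψ g * h⁻¹) * h := by group
    _ = ψ g * h := by rw [h2]
  intro h hh h'
  have hfg : (fun y : H => h * y) = fun y : H => y * h := by
    apply Continuous.ext_on hdense (continuous_const.mul continuous_id)
      (continuous_id.mul continuous_const)
    rintro y ⟨g, rfl⟩
    exact hcomm g h hh
  exact congrFun hfg h'
end

section
/- Let G and H be Polish groups and let ψ : G → H be a normal compression. If H is connected, then for all a, b ∈ G the commutator a·b·a⁻¹·b⁻¹ lies in the connected component of the identity of G; consequently the quotient of G by the connected component of the identity is abelian. -/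
open Filter Topology Set Function MeasureTheory Pointwise

/-- Pettis theorem: for a non-meager Baire-measurable subset `A` of a topological group
which is a Baire space, `A⁻¹ * A` is a neighborhood of `1`. -/
lemma aux_pettis {H : Type*} [TopologicalSpace H] [Group H] [IsTopologicalGroup H] [BaireSpace H]
    {A : Set H} (hA : BaireMeasurableSet A) (hnm : ¬ IsMeagre A) :
    A⁻¹ * A ∈ 𝓝 (1 : H) := by
  obtain ⟨U, hUo, hAU⟩ := hA.residualEq_isOpen
  have hUne : U.Nonempty := by
    rcases U.eq_empty_or_nonempty with h | h
    · exfalso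
      apply hnm
      have : ∀ᶠ x in residual H, x ∈ Aᶜ := by
        filter_upwards [hAU] with x hx
        intro hxA
        have hxU : x ∈ U := cast hx hxA
        simp [h] at hxU
      exact this
    · exact h
  obtain ⟨u, hu⟩ := hUne
  have hVo : IsOpen {x : H | u * x⁻¹ ∈ U} :=
    hUo.preimage (by continuity)
  have hV1 : (1 : H) ∈ {x : H | u * x⁻¹ ∈ U} := by simpa using hu
  refine Filter.mem_of_superset (hVo.mem_nhds hV1) ?_
  intro x hx
  -- hx : u * x⁻¹ ∈ U
  have hR2 : {y : H | (y * x⁻¹ ∈ A) = (y * x⁻¹ ∈ U)} ∈ residual H := by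
    have hmap : ((Homeomorph.mulRight x⁻¹) ⁻¹' {y | (y ∈ A) = (y ∈ U)}) ∈ residual H := by
      rw [← (Homeomorph.mulRight x⁻¹).residual_map_eq] at hAU
      exact Filter.mem_map.mp hAU
    exact hmap
  have hR : ({y : H | (y ∈ A) = (y ∈ U)} ∩ {y : H | (y * x⁻¹ ∈ A) = (y * x⁻¹ ∈ U)})
      ∈ residual H := Filter.inter_mem hAU hR2
  have hWo : IsOpen (U ∩ {y : H | y * x⁻¹ ∈ U}) :=
    hUo.inter (hUo.preimage (by continuity))
  have hWu : u ∈ U ∩ {y : H | y * x⁻¹ ∈ U} := ⟨hu, by simpa using hx⟩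
  obtain ⟨y, hyR, hyW⟩ :=
    (dense_of_mem_residual hR).exists_mem_open hWo ⟨u, hWu⟩
  have hyA : y ∈ A := cast hyR.1.symm hyW.1
  have hyxA : y * x⁻¹ ∈ A := cast hyR.2.symm hyW.2
  exact ⟨(y * x⁻¹)⁻¹, Set.inv_mem_inv.mpr hyxA, y, hyA, by group⟩

/-- A measurable homomorphism between Polish groups is continuous. -/
lemma aux_measurable_hom_continuous {G₁ G₂ : Type*}
    [Group G₁] [TopologicalSpace G₁] [IsTopologicalGroup G₁] [PolishSpace G₁]
    [MeasurableSpace G₁] [BorelSpace G₁]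
    [Group G₂] [TopologicalSpace G₂] [IsTopologicalGroup G₂] [PolishSpace G₂]
    [MeasurableSpace G₂] [BorelSpace G₂]
    (f : G₁ →* G₂) (hf : Measurable f) : Continuous f := by
  letI := TopologicalSpace.upgradeIsCompletelyMetrizable G₁
  letI := TopologicalSpace.upgradeIsCompletelyMetrizable G₂
  apply continuous_of_continuousAt_one f
  rw [ContinuousAt, map_one]
  intro V hV
  rw [Filter.mem_map]
  -- get a symmetric neighborhood W with W * W ⊆ V
  obtain ⟨W₀, hW₀o, hW₀1, hW₀m⟩ := exists_open_nhds_one_mul_subset hV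
  set W : Set G₂ := W₀ ∩ W₀⁻¹ with hW
  have hWo : IsOpen W := hW₀o.inter hW₀o.inv
  have hW1 : (1 : G₂) ∈ W := ⟨hW₀1, by simpa using hW₀1⟩
  have hWV : ∀ w₁ ∈ W, ∀ w₂ ∈ W, w₁⁻¹ * w₂ ∈ V := by
    intro w₁ hw₁ w₂ hw₂
    exact hW₀m (Set.mul_mem_mul (Set.mem_inv.mp hw₁.2) hw₂.1)
  obtain ⟨D, hDc, hDd⟩ := TopologicalSpace.exists_countable_dense G₂
  -- covering
  have hcover : ∀ x : G₁, ∃ d ∈ D, f x ∈ (fun y => d * y) '' W := by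
    intro x
    have : ((fun w => f x * w⁻¹) '' W).Nonempty := ⟨f x * 1⁻¹, 1, hW1, rfl⟩
    have ho : IsOpen ((fun w => f x * w⁻¹) '' W) := by
      have : (fun w => f x * w⁻¹) '' W = (fun y => f x * y) '' W⁻¹ := by
        ext z; constructor
        · rintro ⟨w, hw, rfl⟩; exact ⟨w⁻¹, Set.inv_mem_inv.mpr hw, rfl⟩
        · rintro ⟨y, hy, rfl⟩; exact ⟨y⁻¹, by simpa using hy, by simp⟩
      rw [this]
      exact (Homeomorph.mulLeft (f x)).isOpenMap _ hWo.inv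
    obtain ⟨d, hdD, hdm⟩ := hDd.exists_mem_open ho this
    obtain ⟨w, hwW, hwd⟩ := hdm
    exact ⟨d, hdD, ⟨w, hwW, by rw [← hwd]; group⟩⟩
  -- some piece is non-meager
  have hnm : ∃ d ∈ D, ¬ IsMeagre (f ⁻¹' ((fun y => d * y) '' W)) := by
    by_contra hcon
    push_neg at hcon
    have hmeag : ∀ d ∈ D, ((f ⁻¹' ((fun y => d * y) '' W))ᶜ) ∈ residual G₁ := by
      intro d hd
      exact hcon d hd
    have : (⋂ d ∈ D, (f ⁻¹' ((fun y => d * y) '' W))ᶜ) ∈ residual G₁ :=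
      (countable_bInter_mem hDc).mpr hmeag
    have hne := (dense_of_mem_residual this).nonempty
    obtain ⟨x, hxmem⟩ := hne
    obtain ⟨d, hdD, hdx⟩ := hcover x
    have := Set.mem_iInter₂.mp hxmem d hdD
    exact this hdx
  obtain ⟨d, hdD, hdnm⟩ := hnm
  set A : Set G₁ := f ⁻¹' ((fun y => d * y) '' W) with hA
  have hAmeas : MeasurableSet A :=
    hf (((Homeomorph.mulLeft d).isOpenMap _ hWo).measurableSet)
  have hAB : BaireMeasurableSet A := hAmeas.baireMeasurableSet
  have hnbhd := aux_pettis hAB hdnm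
  refine Filter.mem_of_superset hnbhd ?_
  rintro z ⟨a₁', ha₁', a₂, ha₂, rfl⟩
  have ha₁ : a₁'⁻¹ ∈ A := Set.mem_inv.mp ha₁'
  obtain ⟨w₁, hw₁, hfw₁⟩ := ha₁
  obtain ⟨w₂, hw₂, hfw₂⟩ := ha₂
  have : f (a₁' * a₂) = w₁⁻¹ * w₂ := by
    have h1 : f a₁'⁻¹ = d * w₁ := hfw₁.symm
    have h2 : f a₂ = d * w₂ := hfw₂.symm
    have h1' : f a₁' = (d * w₁)⁻¹ := by
      rw [← h1, map_inv, inv_inv]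
    rw [map_mul, h1', h2]
    group
  rw [Set.mem_preimage, this]
  exact hWV w₁ hw₁ w₂ hw₂

/-- A measurable function into a second-countable space is continuous off a meager set. -/
lemma aux_exists_residual_continuousOn_s10 {X Y : Type*} [TopologicalSpace X] [MeasurableSpace X]
    [BorelSpace X] [TopologicalSpace Y] [SecondCountableTopology Y] [MeasurableSpace Y] [OpensMeasurableSpace Y]
    {f : X → Y} (hf : Measurable f) : ∃ M ∈ residual X, ContinuousOn f M := by
  obtain ⟨B, hBc, hBne, hBb⟩ := TopologicalSpace.exists_countable_basis Y
  have key : ∀ U ∈ B, ∃ V, IsOpen V ∧ (f ⁻¹' U) =ᵇ V := fun U hU =>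
    ((hf (hBb.isOpen hU).measurableSet).baireMeasurableSet).residualEq_isOpen
  choose! V hVo hVe using key
  refine ⟨⋂ U ∈ B, {x | (x ∈ f ⁻¹' U) = (x ∈ V U)}, ?_, ?_⟩
  · exact (countable_bInter_mem hBc).mpr fun U hU => hVe U hU
  · intro t ht
    intro W hW
    rw [Filter.mem_map]
    obtain ⟨U, hUB, hfU, hUW⟩ := hBb.mem_nhds_iff.mp hW
    have htV : t ∈ V U := cast (Set.mem_iInter₂.mp ht U hUB) hfU
    refine mem_nhdsWithin.mpr ⟨V U, hVo U hUB, htV, ?_⟩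
    rintro x ⟨hxV, hxM⟩
    exact hUW (cast (Set.mem_iInter₂.mp hxM U hUB).symm hxV)

/-- Let `G` and `H` be Polish groups and let `ψ : G → H` be a normal
compression. If `H` is connected, then for all `a, b ∈ G` the commutator `a·b·a⁻¹·b⁻¹`
lies in the connected component of the identity of `G`; consequently the quotient of `G`
by the connected component of the identity is abelian (the cosets of `a·b` and `b·a`
coincide for all `a, b`). -/
theorem stmt_10 {G H : Type*}
    [Group G] [TopologicalSpace G] [IsTopologicalGroup G] [PolishSpace G]
    [Group H] [TopologicalSpace H] [IsTopologicalGroup H] [PolishSpace H]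
    (ψ : G →* H) (hψc : Continuous ψ) (hψi : Function.Injective ψ)
    (hdense : DenseRange (⇑ψ)) (hnorm : ψ.range.Normal)
    (hH : ConnectedSpace H) :
    (∀ a b : G, a * b * a⁻¹ * b⁻¹ ∈ connectedComponent (1 : G)) ∧
      (∀ a b : G,
        QuotientGroup.mk (s := Subgroup.connectedComponentOfOne G) (a * b) =
          QuotientGroup.mk (s := Subgroup.connectedComponentOfOne G) (b * a)) := by
  haveI := hH
  borelize G H
  letI := TopologicalSpace.upgradeIsCompletelyMetrizable H
  have hconj : ∀ (h : H) (g : G), ∃ g', ψ g' = h * ψ g * h⁻¹ := fun h g =>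
    MonoidHom.mem_range.mp (hnorm.conj_mem (ψ g) ⟨g, rfl⟩ h)
  choose α hα using hconj
  have hemb : MeasurableEmbedding ψ := hψc.measurableEmbedding hψi
  have hαmul : ∀ h g₁ g₂, α h (g₁ * g₂) = α h g₁ * α h g₂ := by
    intro h g₁ g₂
    apply hψi
    simp only [map_mul, hα]
    group
  have hαinv : ∀ h g, α h⁻¹ (α h g) = g := by
    intro h g; apply hψi; simp only [hα]; group
  have hαone : ∀ h, α h 1 = 1 := by
    intro h; apply hψi; simp only [hα, map_one]; group
  have hαid : ∀ g, α 1 g = g := by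
    intro g; apply hψi; simp only [hα]; group
  have hαψ : ∀ b g, α (ψ b) g = b * g * b⁻¹ := by
    intro b g; apply hψi; simp only [hα, map_mul, map_inv]
  have hαm : ∀ h, Measurable (α h) := by
    intro h
    apply hemb.measurable_comp_iff.mp
    have heq : ψ ∘ α h = fun g => h * ψ g * h⁻¹ := funext fun g => hα h g
    rw [heq]
    exact ((continuous_const.mul hψc).mul continuous_const).measurable
  have hαc : ∀ h, Continuous (α h) := fun h =>
    aux_measurable_hom_continuous (MonoidHom.mk' (α h) (hαmul h)) (hαm h)
  have main : ∀ a b : G, a * b * a⁻¹ * b⁻¹ ∈ connectedComponent (1 : G) := by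
    intro a b
    set F : H → G := fun h => a * α h a⁻¹ with hF
    have hFψ : ∀ h, ψ (F h) = ψ a * (h * (ψ a)⁻¹ * h⁻¹) := by
      intro h
      simp only [hF, map_mul, hα, map_inv]
    have hFm : Measurable F := by
      apply hemb.measurable_comp_iff.mp
      have heq : ψ ∘ F = fun h => ψ a * (h * (ψ a)⁻¹ * h⁻¹) := funext hFψ
      rw [heq]
      exact (continuous_const.mul
        ((continuous_id.mul continuous_const).mul continuous_inv)).measurable
    have hFco : ∀ h k, F (h * k) = F h * α h (F k) := by
      intro h k
      apply hψi
      simp only [map_mul, hFψ, hα]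
      group
    have hF1 : F 1 = 1 := by
      simp only [hF, hαid]
      group
    obtain ⟨M, hM, hMc⟩ := aux_exists_residual_continuousOn_s10 hFm
    have key : ∀ k : ℕ → H, Tendsto k atTop (𝓝 1) →
        Tendsto (fun n => F (k n)) atTop (𝓝 1) := by
      intro k hk
      have hMn : ∀ n : ℕ, {h : H | h * k n ∈ M} ∈ residual H := by
        intro n
        have : ((Homeomorph.mulRight (k n)) ⁻¹' M) ∈ residual H := by
          rw [← (Homeomorph.mulRight (k n)).residual_map_eq] at hM
          exact Filter.mem_map.mp hM
        exact this
      have hR : (M ∩ ⋂ n, {h : H | h * k n ∈ M}) ∈ residual H :=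
        Filter.inter_mem hM ((countable_iInter_mem).mpr hMn)
      obtain ⟨t, ht⟩ := (dense_of_mem_residual hR).nonempty
      have htM : t ∈ M := ht.1
      have htk : ∀ n, t * k n ∈ M := fun n => Set.mem_iInter.mp ht.2 n
      have h1 : Tendsto (fun n => F (t * k n)) atTop (𝓝 (F t)) := by
        have hseq' : Tendsto (fun n => t * k n) atTop (𝓝[M] t) := by
          refine tendsto_nhdsWithin_of_tendsto_nhds_of_eventually_within _ ?_
            (Eventually.of_forall htk)
          have := tendsto_const_nhds (x := t) (f := atTop (α := ℕ)) |>.mul hk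
          simpa using this
        exact (hMc t htM).tendsto.comp hseq'
      have h2 : Tendsto (fun n => α t (F (k n))) atTop (𝓝 1) := by
        have heq : (fun n => α t (F (k n))) = fun n => (F t)⁻¹ * F (t * k n) := by
          funext n
          rw [hFco]
          group
        rw [heq]
        have : Tendsto (fun n => (F t)⁻¹ * F (t * k n)) atTop (𝓝 ((F t)⁻¹ * F t)) :=
          tendsto_const_nhds.mul h1
        simpa using this
      have h3 : Tendsto (fun n => α t⁻¹ (α t (F (k n)))) atTop (𝓝 (α t⁻¹ 1)) :=
        ((hαc t⁻¹).tendsto 1).comp h2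
      simpa [hαinv, hαone] using h3
    have hseq : SeqContinuous F := by
      intro x x₀ hx
      have hk : Tendsto (fun n => x₀⁻¹ * x n) atTop (𝓝 1) := by
        have := tendsto_const_nhds (x := x₀⁻¹) (f := atTop (α := ℕ)) |>.mul hx
        simpa using this
      have h1 := key _ hk
      have h2 : Tendsto (fun n => F x₀ * α x₀ (F (x₀⁻¹ * x n))) atTop
          (𝓝 (F x₀ * α x₀ 1)) :=
        tendsto_const_nhds.mul (((hαc x₀).tendsto 1).comp h1)
      rw [hαone, mul_one] at h2
      have heq : (F ∘ x) = fun n => F x₀ * α x₀ (F (x₀⁻¹ * x n)) := by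
        funext n
        have hxn : x n = x₀ * (x₀⁻¹ * x n) := by group
        rw [Function.comp_apply]
        conv_lhs => rw [hxn]
        rw [hFco]
      rw [heq]
      exact h2
    have hFc : Continuous F := hseq.continuous
    have hsub : Set.range F ⊆ connectedComponent (1 : G) :=
      (isPreconnected_range hFc).subset_connectedComponent ⟨1, hF1⟩
    have hval : F (ψ b) = a * b * a⁻¹ * b⁻¹ := by
      simp only [hF, hαψ]
      group
    rw [← hval]
    exact hsub ⟨ψ b, rfl⟩
  refine ⟨main, fun a b => ?_⟩
  rw [QuotientGroup.eq]
  have h2 : b⁻¹ * a⁻¹ * (b⁻¹)⁻¹ * (a⁻¹)⁻¹ ∈ connectedComponent (1 : G) := main b⁻¹ a⁻¹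
  have heq : (a * b)⁻¹ * (b * a) = b⁻¹ * a⁻¹ * (b⁻¹)⁻¹ * (a⁻¹)⁻¹ := by group
  rw [heq]
  exact h2
end

section
/- Let G be a second countable topological group and let S be a quasi-direct factorization of G. Then S is countable. -/
/-- For a set `J` of closed normal subgroups of `G`, `GJoin J` is the topological closure
of the subgroup generated by the union of the members of `J`. -/
def GJoin {G : Type*} [Group G] [TopologicalSpace G] [IsTopologicalGroup G]
    (J : Set (Subgroup G)) : Subgroup G :=
  (sSup J).topologicalClosure

/-- `S` is a quasi-direct factorization of `G`: `G_S = G` and `S` has the independence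
property. -/
def IsQuasiDirectFactorization {G : Type*} [Group G] [TopologicalSpace G] [IsTopologicalGroup G]
    (S : Set (Subgroup G)) : Prop :=
  GJoin S = ⊤ ∧
    ∀ X : Set (Set (Subgroup G)), (∀ A ∈ X, A ⊆ S) → ⋂₀ X = ∅ →
      ∀ g : G, (∀ A ∈ X, g ∈ GJoin A) → g = 1

/-- Let `G` be a second countable topological group and let `S` be a
quasi-direct factorization of `G`. Then `S` is countable. -/
theorem stmt_13 {G : Type*} [Group G] [TopologicalSpace G] [IsTopologicalGroup G]
    [SecondCountableTopology G]
    (S : Set (Subgroup G))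
    (hSclosed : ∀ N ∈ S, IsClosed (N : Set G)) (hSnormal : ∀ N ∈ S, N.Normal)
    (hS : IsQuasiDirectFactorization S) :
    S.Countable := by
  classical
  obtain ⟨-, hind⟩ := hS
  obtain ⟨b, hbc, -, hb⟩ := TopologicalSpace.exists_countable_basis G
  -- key independence consequence
  have key : ∀ N ∈ S, ∀ g ∈ N, g ∈ GJoin (S \ {N}) → g = 1 := by
    intro N hN g hg hg'
    refine hind {{N}, S \ {N}} ?_ ?_ g ?_
    · rintro A (rfl | rfl)
      · exact Set.singleton_subset_iff.mpr hN
      · exact Set.diff_subset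
    · ext M
      simp only [Set.mem_sInter, Set.mem_insert_iff, Set.mem_singleton_iff, Set.mem_empty_iff_false,
        iff_false]
      intro h
      have h1 := h {N} (Or.inl rfl)
      have h2 := h (S \ {N}) (Or.inr rfl)
      simp only [Set.mem_singleton_iff] at h1
      exact h2.2 h1
    · rintro A (rfl | rfl)
      · exact Subgroup.le_topologicalClosure _ (by simpa using hg)
      · exact hg'
  have main : ∀ N : Subgroup G, N ∈ S ∧ N ≠ ⊥ →
      ∃ t, t ∈ b ∧ (∃ g ∈ N, g ∈ t) ∧ ∀ x ∈ GJoin (S \ {N}), x ∉ t := by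
    rintro N ⟨hN, hNbot⟩
    obtain ⟨g, hg, hg1⟩ := (Subgroup.bot_or_exists_ne_one N).resolve_left hNbot
    have hgnot : g ∈ ((GJoin (S \ {N}) : Set G))ᶜ := fun h => hg1 (key N hN g hg h)
    have hopen : IsOpen ((GJoin (S \ {N}) : Set G))ᶜ :=
      (Subgroup.isClosed_topologicalClosure _).isOpen_compl
    obtain ⟨t, htb, hgt, hts⟩ := hb.exists_subset_of_mem_open hgnot hopen
    exact ⟨t, htb, ⟨g, hg, hgt⟩, fun x hx hxt => hts hxt hx⟩
  choose f hfb hfg hfdisj using main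
  set S' : Set (Subgroup G) := {N ∈ S | N ≠ ⊥} with hS'
  have hmaps : Set.MapsTo (fun N : Subgroup G => if h : N ∈ S ∧ N ≠ ⊥ then f N h else ∅) S' b := by
    intro N hN
    have hN' : N ∈ S ∧ N ≠ ⊥ := hN
    simp only [dif_pos hN']
    exact hfb N hN'
  have hinj : Set.InjOn (fun N : Subgroup G => if h : N ∈ S ∧ N ≠ ⊥ then f N h else ∅) S' := by
    intro N hN M hM heq
    by_contra hne
    have hN' : N ∈ S ∧ N ≠ ⊥ := hN
    have hM' : M ∈ S ∧ M ≠ ⊥ := hM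
    simp only [dif_pos hN', dif_pos hM'] at heq
    -- g of M lies in f M hM = f N hN, but g ∈ M ≤ GJoin (S \ {N})
    obtain ⟨g, hgM, hgt⟩ := hfg M hM'
    have hgle : g ∈ GJoin (S \ {N}) := by
      have h1 : M ≤ sSup (S \ {N}) := le_sSup ⟨hM'.1, fun h => hne (Set.mem_singleton_iff.mp h).symm⟩
      exact Subgroup.le_topologicalClosure _ (h1 hgM)
    exact hfdisj N hN' g hgle (heq ▸ hgt)
  have hS'c : S'.Countable := hmaps.countable_of_injOn hinj hbc
  have : S ⊆ insert ⊥ S' := by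
    intro N hN
    by_cases h : N = ⊥
    · exact Or.inl h
    · exact Or.inr ⟨hN, h⟩
  exact (hS'c.insert ⊥).mono this
end

section
/- If G is a Polish group, then the set of components of G is countable. -/
/-- A component of a topological group `G` is a closed subgroup `M` such that, writing `N`
for the topological closure of the normal closure of `M` in `G`:
(a) `M` is a normal subgroup of `N`;
(b) there exist `a, b ∈ M` whose commutator does not lie in the center of `M`;
(c) every proper closed normal subgroup `K` of `M` commutes elementwise with `N`. -/
def IsComponent {G : Type*} [Group G] [TopologicalSpace G] [IsTopologicalGroup G]
    (M : Subgroup G) : Prop :=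
  IsClosed (M : Set G) ∧
  (∀ n ∈ (Subgroup.normalClosure (M : Set G)).topologicalClosure,
      ∀ m ∈ M, n * m * n⁻¹ ∈ M) ∧
  (∃ a ∈ M, ∃ b ∈ M, ∃ c ∈ M,
      (a * b * a⁻¹ * b⁻¹) * c ≠ c * (a * b * a⁻¹ * b⁻¹)) ∧
  (∀ K : Subgroup G, K ≤ M → K ≠ M → IsClosed (K : Set G) →
      (∀ m ∈ M, ∀ k ∈ K, m * k * m⁻¹ ∈ K) →
      ∀ k ∈ K, ∀ n ∈ (Subgroup.normalClosure (M : Set G)).topologicalClosure,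
        k * n = n * k)

section CompAux

variable {G : Type*} [Group G]

/-- simple commutation helpers -/
lemma comm_mul' {x a b : G} (ha : x * a = a * x) (hb : x * b = b * x) :
    x * (a * b) = (a * b) * x := by
  rw [← mul_assoc, ha, mul_assoc, hb, ← mul_assoc]

lemma comm_inv' {x a : G} (h : x * a = a * x) : x * a⁻¹ = a⁻¹ * x := by
  have h2 : a⁻¹ * (x * a) * a⁻¹ = a⁻¹ * (a * x) * a⁻¹ := by rw [h]
  calc x * a⁻¹ = a⁻¹ * (a * x) * a⁻¹ := by group
    _ = a⁻¹ * (x * a) * a⁻¹ := h2.symm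
    _ = a⁻¹ * x := by group

/-- The commutator homomorphism trick: if all the commutators `[m, m']` for `m ∈ M`
commute with `M` and with each other, then commutators of `M` commute with `m'`. -/
lemma hom_trick (M : Subgroup G) (m' : G)
    (H1 : ∀ m₁ ∈ M, ∀ m₂ ∈ M,
      (m₂ * m' * m₂⁻¹ * m'⁻¹) * m₁ = m₁ * (m₂ * m' * m₂⁻¹ * m'⁻¹))
    (H2 : ∀ m₁ ∈ M, ∀ m₂ ∈ M,
      (m₁ * m' * m₁⁻¹ * m'⁻¹) * (m₂ * m' * m₂⁻¹ * m'⁻¹)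
        = (m₂ * m' * m₂⁻¹ * m'⁻¹) * (m₁ * m' * m₁⁻¹ * m'⁻¹)) :
    ∀ a ∈ M, ∀ b ∈ M, (a * b * a⁻¹ * b⁻¹) * m' = m' * (a * b * a⁻¹ * b⁻¹) := by
  intro a ha b hb
  let f : G → G := fun x => x * m' * x⁻¹ * m'⁻¹
  have H1' : ∀ m₁ ∈ M, ∀ m₂ ∈ M, f m₂ * m₁ = m₁ * f m₂ := H1
  have H2' : ∀ m₁ ∈ M, ∀ m₂ ∈ M, f m₁ * f m₂ = f m₂ * f m₁ := H2
  have hmul : ∀ x ∈ M, ∀ y ∈ M, f (x * y) = f x * f y := by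
    intro x hx y hy
    have e1 : f (x * y) = x * f y * x⁻¹ * f x := by
      show (x * y) * m' * (x * y)⁻¹ * m'⁻¹
          = x * (y * m' * y⁻¹ * m'⁻¹) * x⁻¹ * (x * m' * x⁻¹ * m'⁻¹)
      group
    rw [e1, ← H1' x hx y hy, mul_inv_cancel_right]
    exact H2' y hy x hx
  have hinv : ∀ x ∈ M, f x⁻¹ = (f x)⁻¹ := by
    intro x hx
    have hc : f x * x = x * f x := H1' x hx x hx
    have hc2 : x * (f x)⁻¹ = (f x)⁻¹ * x := comm_inv' hc.symm
    have e1 : f x⁻¹ = x⁻¹ * (f x)⁻¹ * x := by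
      show x⁻¹ * m' * x⁻¹⁻¹ * m'⁻¹ = x⁻¹ * (x * m' * x⁻¹ * m'⁻¹)⁻¹ * x
      group
    rw [e1, mul_assoc, ← hc2, ← mul_assoc, inv_mul_cancel, one_mul]
  have e : f (a * b * a⁻¹ * b⁻¹) = f a * f b * (f a)⁻¹ * (f b)⁻¹ := by
    rw [hmul _ (mul_mem (mul_mem ha hb) (inv_mem ha)) _ (inv_mem hb),
        hmul _ (mul_mem ha hb) _ (inv_mem ha),
        hmul _ ha _ hb, hinv _ ha, hinv _ hb]
  have e2 : f a * f b * (f a)⁻¹ * (f b)⁻¹ = 1 := by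
    rw [H2' a ha b hb]; group
  have e4 : (a * b * a⁻¹ * b⁻¹) * m' * (a * b * a⁻¹ * b⁻¹)⁻¹ * m'⁻¹ = 1 := e.trans e2
  rw [mul_inv_eq_one, mul_inv_eq_iff_eq_mul] at e4
  exact e4

end CompAux

section CompTop

variable {G : Type*} [Group G] [TopologicalSpace G] [IsTopologicalGroup G]

/-- The closure of the normal closure. -/
def NCl (M : Subgroup G) : Subgroup G :=
  (Subgroup.normalClosure (M : Set G)).topologicalClosure

lemma mem_NCl {M : Subgroup G} {m : G} (hm : m ∈ M) : m ∈ NCl M :=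
  Subgroup.le_topologicalClosure _ (Subgroup.le_normalClosure hm)

lemma NCl_normal (M : Subgroup G) : (NCl M).Normal :=
  Subgroup.is_normal_topologicalClosure _

lemma conj_mem_NCl {M : Subgroup G} {x : G} (hx : x ∈ NCl M) (g : G) :
    g * x * g⁻¹ ∈ NCl M :=
  (NCl_normal M).conj_mem x hx g

lemma NCl_isClosed (M : Subgroup G) : IsClosed ((NCl M : Subgroup G) : Set G) :=
  Subgroup.isClosed_topologicalClosure _

/-- restatements of the parts of IsComponent -/
lemma IsComponent.closed {M : Subgroup G} (hM : IsComponent M) : IsClosed (M : Set G) := hM.1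

lemma IsComponent.conj {M : Subgroup G} (hM : IsComponent M) :
    ∀ n ∈ NCl M, ∀ m ∈ M, n * m * n⁻¹ ∈ M := hM.2.1

lemma IsComponent.wit {M : Subgroup G} (hM : IsComponent M) :
    ∃ a ∈ M, ∃ b ∈ M, ∃ c ∈ M,
      (a * b * a⁻¹ * b⁻¹) * c ≠ c * (a * b * a⁻¹ * b⁻¹) := hM.2.2.1

lemma IsComponent.min {M : Subgroup G} (hM : IsComponent M) :
    ∀ K : Subgroup G, K ≤ M → K ≠ M → IsClosed (K : Set G) →
      (∀ m ∈ M, ∀ k ∈ K, m * k * m⁻¹ ∈ K) →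
      ∀ k ∈ K, ∀ n ∈ NCl M, k * n = n * k := hM.2.2.2

variable [T2Space G]

lemma centralizer_closed (g : G) :
    IsClosed ((Subgroup.centralizer {g} : Subgroup G) : Set G) := by
  have h : ((Subgroup.centralizer {g} : Subgroup G) : Set G) = {x : G | g * x = x * g} := by
    ext x
    simp [Subgroup.mem_centralizer_iff]
  rw [h]
  exact isClosed_eq (continuous_const.mul continuous_id) (continuous_id.mul continuous_const)

/-- A component is topologically perfect: anything commuting with all commutators of `M`
commutes with all of `M`. -/
lemma perfect_comp {M : Subgroup G} (hM : IsComponent M) {g : G}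
    (hg : ∀ a ∈ M, ∀ b ∈ M,
      g * (a * b * a⁻¹ * b⁻¹) = (a * b * a⁻¹ * b⁻¹) * g) :
    ∀ m ∈ M, g * m = m * g := by
  classical
  set gens : Set G := {x : G | ∃ a ∈ M, ∃ b ∈ M, x = a * b * a⁻¹ * b⁻¹} with hgens
  set S : Subgroup G := (Subgroup.closure gens).topologicalClosure with hS
  have hgensM : gens ⊆ (M : Set G) := by
    rintro x ⟨a, ha, b, hb, rfl⟩
    exact mul_mem (mul_mem (mul_mem ha hb) (inv_mem ha)) (inv_mem hb)
  have hSM : S ≤ M :=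
    Subgroup.topologicalClosure_minimal _ ((Subgroup.closure_le M).mpr hgensM) hM.closed
  have hconj : ∀ m ∈ M, ∀ k ∈ S, m * k * m⁻¹ ∈ S := by
    intro m hm k hk
    have hmaps0 : Set.MapsTo (fun x => m * x * m⁻¹)
        ((Subgroup.closure gens : Subgroup G) : Set G)
        ((Subgroup.closure gens : Subgroup G) : Set G) := by
      intro x hx
      induction hx using Subgroup.closure_induction with
      | mem x hx =>
        obtain ⟨a, ha, b, hb, rfl⟩ := hx
        refine Subgroup.subset_closure
          ⟨m * a * m⁻¹, mul_mem (mul_mem hm ha) (inv_mem hm),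
           m * b * m⁻¹, mul_mem (mul_mem hm hb) (inv_mem hm), ?_⟩
        group
      | one =>
        show m * 1 * m⁻¹ ∈ _
        have h : m * 1 * m⁻¹ = 1 := by group
        rw [h]; exact Subgroup.one_mem _
      | mul x y hx hy ihx ihy =>
        have h : m * (x * y) * m⁻¹ = (m * x * m⁻¹) * (m * y * m⁻¹) := by group
        show m * (x * y) * m⁻¹ ∈ _
        rw [h]; exact mul_mem ihx ihy
      | inv x hx ihx =>
        have h : m * x⁻¹ * m⁻¹ = (m * x * m⁻¹)⁻¹ := by group
        show m * x⁻¹ * m⁻¹ ∈ _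
        rw [h]; exact inv_mem ihx
    have hcont : Continuous (fun x : G => m * x * m⁻¹) :=
      (continuous_const.mul continuous_id).mul continuous_const
    exact hmaps0.closure hcont hk
  have hSeq : S = M := by
    by_contra hne
    obtain ⟨a, ha, b, hb, c, hc, hnc⟩ := hM.wit
    have hcomm := hM.min S hSM hne (Subgroup.isClosed_topologicalClosure _) hconj
    have hab : a * b * a⁻¹ * b⁻¹ ∈ S :=
      Subgroup.le_topologicalClosure _ (Subgroup.subset_closure ⟨a, ha, b, hb, rfl⟩)
    exact hnc (hcomm _ hab c (mem_NCl hc))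
  have hle : S ≤ Subgroup.centralizer {g} := by
    refine Subgroup.topologicalClosure_minimal _ ((Subgroup.closure_le _).mpr ?_)
      (centralizer_closed g)
    rintro x ⟨a, ha, b, hb, rfl⟩
    refine Subgroup.mem_centralizer_iff.mpr ?_
    rintro h rfl
    exact hg a ha b hb
  intro m hm
  have hmS : m ∈ S := hSeq.symm ▸ hm
  exact Subgroup.mem_centralizer_iff.mp (hle hmS) g rfl

end CompTop

section CompKey

variable {G : Type*} [Group G] [TopologicalSpace G] [IsTopologicalGroup G] [T2Space G]

omit [T2Space G] in
lemma inf_closed {M : Subgroup G} (hM : IsComponent M) (N : Subgroup G)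
    (hN : IsClosed ((N : Subgroup G) : Set G)) :
    IsClosed ((M ⊓ N : Subgroup G) : Set G) := by
  have h : ((M ⊓ N : Subgroup G) : Set G) = (M : Set G) ∩ (N : Set G) := rfl
  rw [h]
  exact hM.closed.inter hN

/-- Case: `M ≤ NCl M'` but `M' ≰ NCl M`. -/
lemma keyB {M M' : Subgroup G} (hM : IsComponent M) (hM' : IsComponent M')
    (hle : M ≤ NCl M') (hnle : ¬ M' ≤ NCl M) :
    ∀ m ∈ M, ∀ m' ∈ M', m * m' = m' * m := by
  set W : Subgroup G := M' ⊓ NCl M with hW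
  have hWne : W ≠ M' := by
    intro h
    exact hnle (h ▸ (inf_le_right : W ≤ NCl M))
  have hWconj : ∀ x ∈ M', ∀ k ∈ W, x * k * x⁻¹ ∈ W := by
    intro x hx k hk
    obtain ⟨hk1, hk2⟩ := Subgroup.mem_inf.mp hk
    exact Subgroup.mem_inf.mpr ⟨mul_mem (mul_mem hx hk1) (inv_mem hx), conj_mem_NCl hk2 x⟩
  have hc := hM'.min W inf_le_left hWne (inf_closed hM' _ (NCl_isClosed M)) hWconj
  have hu : ∀ m ∈ M, ∀ m' ∈ M', m * m' * m⁻¹ * m'⁻¹ ∈ W := by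
    intro m hm m' hm'
    refine Subgroup.mem_inf.mpr ⟨?_, ?_⟩
    · exact mul_mem (hM'.conj m (hle hm) m' hm') (inv_mem hm')
    · have h1 : m * m' * m⁻¹ * m'⁻¹ = m * (m' * m⁻¹ * m'⁻¹) := by group
      rw [h1]
      exact mul_mem (mem_NCl hm) (conj_mem_NCl (inv_mem (mem_NCl hm)) m')
  intro m hm m' hm'
  have ht := hom_trick M m'
    (fun m₁ h₁ m₂ h₂ => hc _ (hu m₂ h₂ m' hm') m₁ (hle h₁))
    (fun m₁ h₁ m₂ h₂ => hc _ (hu m₁ h₁ m' hm') _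
      (mem_NCl (Subgroup.mem_inf.mp (hu m₂ h₂ m' hm')).1))
  exact (perfect_comp hM (fun a ha b hb => (ht a ha b hb).symm) m hm).symm

/-- Case: `M ≤ NCl M'` and `M' ≤ NCl M`. -/
lemma keyA {M M' : Subgroup G} (hM : IsComponent M) (hM' : IsComponent M')
    (hne : M ≠ M') (h1 : M ≤ NCl M') (h2 : M' ≤ NCl M) :
    ∀ m ∈ M, ∀ m' ∈ M', m * m' = m' * m := by
  by_cases hEM : M ⊓ M' = M
  · exfalso
    have hMM' : M ≤ M' := inf_eq_left.mp hEM
    have hcomm := hM'.min M hMM' hne hM.closed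
      (fun x hx k hk => hM.conj x (h2 hx) k hk)
    obtain ⟨a, ha, b, hb, c, hc, hnc⟩ := hM.wit
    have hab : a * b = b * a := hcomm a ha b (mem_NCl (hMM' hb))
    have h : a * b * a⁻¹ * b⁻¹ = 1 := by rw [hab]; group
    rw [h] at hnc
    simp at hnc
  by_cases hEM' : M ⊓ M' = M'
  · exfalso
    have hM'M : M' ≤ M := inf_eq_right.mp hEM'
    have hcomm := hM.min M' hM'M (fun h => hne h.symm) hM'.closed
      (fun x hx k hk => hM'.conj x (h1 hx) k hk)
    obtain ⟨a, ha, b, hb, c, hc, hnc⟩ := hM'.wit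
    have hab : a * b = b * a := hcomm a ha b (mem_NCl (hM'M hb))
    have h : a * b * a⁻¹ * b⁻¹ = 1 := by rw [hab]; group
    rw [h] at hnc
    simp at hnc
  have hEconj : ∀ x ∈ M, ∀ k ∈ M ⊓ M', x * k * x⁻¹ ∈ M ⊓ M' := by
    intro x hx k hk
    obtain ⟨hk1, hk2⟩ := Subgroup.mem_inf.mp hk
    exact Subgroup.mem_inf.mpr
      ⟨mul_mem (mul_mem hx hk1) (inv_mem hx), hM'.conj x (h1 hx) k hk2⟩
  have hcE := hM.min (M ⊓ M') inf_le_left hEM (inf_closed hM _ hM'.closed) hEconj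
  have hu : ∀ m ∈ M, ∀ m' ∈ M', m * m' * m⁻¹ * m'⁻¹ ∈ M ⊓ M' := by
    intro m hm m' hm'
    refine Subgroup.mem_inf.mpr ⟨?_, ?_⟩
    · have hx : m * m' * m⁻¹ * m'⁻¹ = m * (m' * m⁻¹ * m'⁻¹) := by group
      rw [hx]
      exact mul_mem hm (hM.conj m' (h2 hm') m⁻¹ (inv_mem hm))
    · exact mul_mem (hM'.conj m (h1 hm) m' hm') (inv_mem hm')
  intro m hm m' hm'
  have ht := hom_trick M m'
    (fun m₁ h₁ m₂ h₂ => hcE _ (hu m₂ h₂ m' hm') m₁ (mem_NCl h₁))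
    (fun m₁ h₁ m₂ h₂ => hcE _ (hu m₁ h₁ m' hm') _
      (mem_NCl (Subgroup.mem_inf.mp (hu m₂ h₂ m' hm')).1))
  exact (perfect_comp hM (fun a ha b hb => (ht a ha b hb).symm) m hm).symm

/-- In the case `M ≰ NCl M'`, every commutator `[m, m']` centralizes `M`. -/
lemma keyC_step {M M' : Subgroup G} (hM : IsComponent M) (h1 : ¬ M ≤ NCl M') :
    ∀ m ∈ M, ∀ m' ∈ M', ∀ n ∈ M,
      (m * m' * m⁻¹ * m'⁻¹) * n = n * (m * m' * m⁻¹ * m'⁻¹) := by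
  set W : Subgroup G := M ⊓ NCl M' with hW
  have hWne : W ≠ M := by
    intro h
    exact h1 (h ▸ (inf_le_right : W ≤ NCl M'))
  have hWconj : ∀ x ∈ M, ∀ k ∈ W, x * k * x⁻¹ ∈ W := by
    intro x hx k hk
    obtain ⟨hk1, hk2⟩ := Subgroup.mem_inf.mp hk
    exact Subgroup.mem_inf.mpr ⟨mul_mem (mul_mem hx hk1) (inv_mem hx), conj_mem_NCl hk2 x⟩
  have hcW := hM.min W inf_le_left hWne (inf_closed hM _ (NCl_isClosed M')) hWconj
  intro m hm m' hm'
  have huN : m * m' * m⁻¹ * m'⁻¹ ∈ NCl M := by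
    have h : m * m' * m⁻¹ * m'⁻¹ = m * (m' * m⁻¹ * m'⁻¹) := by group
    rw [h]
    exact mul_mem (mem_NCl hm) (conj_mem_NCl (inv_mem (mem_NCl hm)) m')
  have huN' : m * m' * m⁻¹ * m'⁻¹ ∈ NCl M' :=
    mul_mem (conj_mem_NCl (mem_NCl hm') m) (inv_mem (mem_NCl hm'))
  set u : G := m * m' * m⁻¹ * m'⁻¹ with hu
  have hvW : ∀ n ∈ M, n * u * n⁻¹ * u⁻¹ ∈ W := by
    intro n hn
    refine Subgroup.mem_inf.mpr ⟨?_, ?_⟩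
    · have h : n * u * n⁻¹ * u⁻¹ = n * (u * n⁻¹ * u⁻¹) := by group
      rw [h]
      exact mul_mem hn (hM.conj u huN n⁻¹ (inv_mem hn))
    · exact mul_mem (conj_mem_NCl huN' n) (inv_mem huN')
  have ht := hom_trick M u
    (fun m₁ hm₁ m₂ hm₂ => hcW _ (hvW m₂ hm₂) m₁ (mem_NCl hm₁))
    (fun m₁ hm₁ m₂ hm₂ => hcW _ (hvW m₁ hm₁) _
      (mem_NCl (Subgroup.mem_inf.mp (hvW m₂ hm₂)).1))
  exact perfect_comp hM (fun a ha b hb => (ht a ha b hb).symm)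

/-- Case: `M ≰ NCl M'` and `M' ≰ NCl M`. -/
lemma keyC {M M' : Subgroup G} (hM : IsComponent M) (hM' : IsComponent M')
    (h1 : ¬ M ≤ NCl M') (h2 : ¬ M' ≤ NCl M) :
    ∀ m ∈ M, ∀ m' ∈ M', m * m' = m' * m := by
  have step1 := keyC_step hM h1
  have step1x := keyC_step hM' h2
  have step1' : ∀ m ∈ M, ∀ m' ∈ M', ∀ n' ∈ M',
      (m * m' * m⁻¹ * m'⁻¹) * n' = n' * (m * m' * m⁻¹ * m'⁻¹) := by
    intro m hm m' hm' n' hn'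
    have h := step1x m' hm' m hm n' hn'
    have hinv : m * m' * m⁻¹ * m'⁻¹ = (m' * m * m'⁻¹ * m⁻¹)⁻¹ := by group
    rw [hinv]
    exact (comm_inv' h.symm).symm
  intro m hm m' hm'
  have ht := hom_trick M m'
    (fun m₁ h₁ m₂ h₂ => step1 m₂ h₂ m' hm' m₁ h₁)
    (by
      intro m₁ h₁ m₂ h₂
      have c1 : (m₁ * m' * m₁⁻¹ * m'⁻¹) * m₂ = m₂ * (m₁ * m' * m₁⁻¹ * m'⁻¹) :=
        step1 m₁ h₁ m' hm' m₂ h₂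
      have c2 : (m₁ * m' * m₁⁻¹ * m'⁻¹) * m' = m' * (m₁ * m' * m₁⁻¹ * m'⁻¹) :=
        step1' m₁ h₁ m' hm' m' hm'
      calc (m₁ * m' * m₁⁻¹ * m'⁻¹) * (m₂ * m' * m₂⁻¹ * m'⁻¹)
          = (m₁ * m' * m₁⁻¹ * m'⁻¹) * (((m₂ * m') * m₂⁻¹) * m'⁻¹) := by group
        _ = (((m₂ * m') * m₂⁻¹) * m'⁻¹) * (m₁ * m' * m₁⁻¹ * m'⁻¹) :=
            comm_mul' (comm_mul' (comm_mul' c1 c2) (comm_inv' c1)) (comm_inv' c2)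
        _ = (m₂ * m' * m₂⁻¹ * m'⁻¹) * (m₁ * m' * m₁⁻¹ * m'⁻¹) := by group)
  exact (perfect_comp hM (fun a ha b hb => (ht a ha b hb).symm) m hm).symm

/-- Distinct components commute elementwise. -/
lemma components_commute {M M' : Subgroup G} (hM : IsComponent M) (hM' : IsComponent M')
    (hne : M ≠ M') : ∀ m ∈ M, ∀ m' ∈ M', m * m' = m' * m := by
  by_cases h1 : M ≤ NCl M' <;> by_cases h2 : M' ≤ NCl M
  · exact keyA hM hM' hne h1 h2
  · exact keyB hM hM' h1 h2
  · intro m hm m' hm'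
    exact (keyB hM' hM h2 h1 m' hm' m hm).symm
  · exact keyC hM hM' h1 h2

end CompKey

/-- If `G` is a Polish group, then the set of components of `G` is
countable. -/
theorem stmt_16 {G : Type*} [Group G] [TopologicalSpace G] [IsTopologicalGroup G]
    [PolishSpace G] :
    {M : Subgroup G | IsComponent M}.Countable := by
  classical
  have hwit : ∀ M : Subgroup G, M ∈ {M : Subgroup G | IsComponent M} →
      ∃ a ∈ M, ∃ b ∈ M, ∃ c ∈ M,
        (a * b * a⁻¹ * b⁻¹) * c ≠ c * (a * b * a⁻¹ * b⁻¹) :=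
    fun M hM => hM.2.2.1
  choose a ha b hb c hc hnc using hwit
  obtain ⟨B, hBcount, -, hBbasis⟩ := TopologicalSpace.exists_countable_basis G
  have hU : ∀ (M : Subgroup G) (hM : M ∈ {M : Subgroup G | IsComponent M}),
      ∃ V ∈ B, a M hM ∈ V ∧ V ⊆ {x : G |
        (x * b M hM * x⁻¹ * (b M hM)⁻¹) * c M hM
          ≠ c M hM * (x * b M hM * x⁻¹ * (b M hM)⁻¹)} := by
    intro M hM
    have hclosed : IsClosed {x : G |
        (x * b M hM * x⁻¹ * (b M hM)⁻¹) * c M hM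
          = c M hM * (x * b M hM * x⁻¹ * (b M hM)⁻¹)} := by
      apply isClosed_eq
      · exact ((((continuous_id.mul continuous_const).mul continuous_inv).mul
          continuous_const).mul continuous_const)
      · exact (continuous_const.mul (((continuous_id.mul continuous_const).mul
          continuous_inv).mul continuous_const))
    have hopen : IsOpen {x : G |
        (x * b M hM * x⁻¹ * (b M hM)⁻¹) * c M hM
          ≠ c M hM * (x * b M hM * x⁻¹ * (b M hM)⁻¹)} :=
      hclosed.isOpen_compl
    exact hBbasis.exists_subset_of_mem_open (hnc M hM) hopen
  choose V hVB haV hVsub using hU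
  have hinj : ∀ (M₁ : Subgroup G) (h₁ : M₁ ∈ {M : Subgroup G | IsComponent M})
      (M₂ : Subgroup G) (h₂ : M₂ ∈ {M : Subgroup G | IsComponent M}),
      V M₁ h₁ = V M₂ h₂ → M₁ = M₂ := by
    intro M₁ h₁ M₂ h₂ hV
    by_contra hne
    have hmem : a M₂ h₂ ∈ V M₁ h₁ := by
      rw [hV]; exact haV M₂ h₂
    have hne2 := hVsub M₁ h₁ hmem
    apply hne2
    have hcomm : a M₂ h₂ * b M₁ h₁ = b M₁ h₁ * a M₂ h₂ :=
      components_commute h₂ h₁ (fun h => hne h.symm) (a M₂ h₂) (ha M₂ h₂)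
        (b M₁ h₁) (hb M₁ h₁)
    have h : a M₂ h₂ * b M₁ h₁ * (a M₂ h₂)⁻¹ * (b M₁ h₁)⁻¹ = 1 := by
      rw [hcomm]; group
    show (a M₂ h₂ * b M₁ h₁ * (a M₂ h₂)⁻¹ * (b M₁ h₁)⁻¹) * c M₁ h₁
        = c M₁ h₁ * (a M₂ h₂ * b M₁ h₁ * (a M₂ h₂)⁻¹ * (b M₁ h₁)⁻¹)
    rw [h]
    group
  have : Countable B := hBcount.to_subtype
  refine Set.countable_coe_iff.mp ?_
  exact Function.Injective.countable
    (f := fun (M : {M : Subgroup G | IsComponent M}) => (⟨V M.1 M.2, hVB M.1 M.2⟩ : B))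
    (fun M₁ M₂ h => Subtype.ext (hinj _ _ _ _ (congrArg Subtype.val h)))
end

section
/- Let G be a topological group and let K₁/L₁ and K₂/L₂ be normal factors of G (closed normal subgroups with L₁ < K₁ and L₂ < K₂). If K₁/L₁ and K₂/L₂ are associated, then their centralizers in G coincide: C_G(K₁/L₁) = C_G(K₂/L₂). -/
/-- Normal factors `K₁/L₁` and `K₂/L₂` of a topological group `G` are associated if
`cl(K₁L₂) = cl(K₂L₁)`, `K₁ ∩ cl(L₁L₂) = L₁` and `K₂ ∩ cl(L₁L₂) = L₂`, where `cl` denotes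
the topological closure of the subgroup generated. -/
def AssociatedFactors {G : Type*} [Group G] [TopologicalSpace G] [IsTopologicalGroup G]
    (K₁ L₁ K₂ L₂ : Subgroup G) : Prop :=
  (K₁ ⊔ L₂).topologicalClosure = (K₂ ⊔ L₁).topologicalClosure ∧
    K₁ ⊓ (L₁ ⊔ L₂).topologicalClosure = L₁ ∧
    K₂ ⊓ (L₁ ⊔ L₂).topologicalClosure = L₂

/-- The centralizer of a normal factor `K/L` of `G`:
`C_G(K/L) = {g ∈ G : g·k·g⁻¹·k⁻¹ ∈ L for all k ∈ K}`. -/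
def FactorCentralizer {G : Type*} [Group G] (K L : Subgroup G) : Set G :=
  {g : G | ∀ k ∈ K, g * k * g⁻¹ * k⁻¹ ∈ L}

private lemma aux_subset {G : Type*} [Group G] [TopologicalSpace G] [IsTopologicalGroup G]
    (K₁ L₁ K₂ L₂ : Subgroup G) (hL₁n : L₁.Normal) (hL₂n : L₂.Normal) (hK₂n : K₂.Normal)
    (heq : (K₁ ⊔ L₂).topologicalClosure = (K₂ ⊔ L₁).topologicalClosure)
    (hinf : K₂ ⊓ (L₁ ⊔ L₂).topologicalClosure = L₂) :
    FactorCentralizer K₁ L₁ ⊆ FactorCentralizer K₂ L₂ := by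
  intro g hg k hk
  set M : Subgroup G := (L₁ ⊔ L₂).topologicalClosure with hM
  let S : Subgroup G :=
    { carrier := {x : G | g * x * g⁻¹ * x⁻¹ ∈ M}
      one_mem' := by simpa using one_mem M
      mul_mem' := by
        intro x y hx hy
        have key : g * (x * y) * g⁻¹ * (x * y)⁻¹
            = (g * x * g⁻¹ * x⁻¹) * (x * (g * y * g⁻¹ * y⁻¹) * x⁻¹) := by group
        haveI := hL₁n; haveI := hL₂n
        haveI : (L₁ ⊔ L₂).Normal := Subgroup.sup_normal L₁ L₂
        have hMn : M.Normal := Subgroup.is_normal_topologicalClosure (L₁ ⊔ L₂)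
        simp only [Set.mem_setOf_eq] at *
        rw [key]
        exact mul_mem hx (hMn.conj_mem _ hy x)
      inv_mem' := by
        intro x hx
        have key : g * x⁻¹ * g⁻¹ * x⁻¹⁻¹ = x⁻¹ * (g * x * g⁻¹ * x⁻¹)⁻¹ * x⁻¹⁻¹ := by group
        haveI := hL₁n; haveI := hL₂n
        haveI : (L₁ ⊔ L₂).Normal := Subgroup.sup_normal L₁ L₂
        have hMn : M.Normal := Subgroup.is_normal_topologicalClosure (L₁ ⊔ L₂)
        simp only [Set.mem_setOf_eq] at *
        rw [key]
        exact hMn.conj_mem _ (inv_mem hx) x⁻¹ }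
  have hSc : IsClosed (S : Set G) := by
    have : Continuous fun x : G => g * x * g⁻¹ * x⁻¹ := by continuity
    exact (Subgroup.isClosed_topologicalClosure (L₁ ⊔ L₂)).preimage this
  have hK₁S : K₁ ≤ S := fun x hx => by
    have := hg x hx
    exact Subgroup.le_topologicalClosure _ (Subgroup.mem_sup_left this)
  have hL₂S : L₂ ≤ S := fun x hx => by
    have : g * x * g⁻¹ * x⁻¹ ∈ L₂ := by
      have h1 : g * x * g⁻¹ ∈ L₂ := by
        have := hL₂n.conj_mem x hx g
        simpa [mul_assoc] using this
      simpa [mul_assoc] using mul_mem h1 (inv_mem hx)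
    exact Subgroup.le_topologicalClosure _ (Subgroup.mem_sup_right this)
  have hsup : (K₁ ⊔ L₂).topologicalClosure ≤ S :=
    Subgroup.topologicalClosure_minimal _ (sup_le hK₁S hL₂S) hSc
  have hkS : k ∈ S := by
    rw [heq] at hsup
    exact hsup (Subgroup.le_topologicalClosure _ (Subgroup.mem_sup_left hk))
  have hkK₂ : g * k * g⁻¹ * k⁻¹ ∈ K₂ := by
    have h1 : g * k * g⁻¹ ∈ K₂ := by
      have := hK₂n.conj_mem k hk g
      simpa [mul_assoc] using this
    simpa [mul_assoc] using mul_mem h1 (inv_mem hk)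
  have : g * k * g⁻¹ * k⁻¹ ∈ K₂ ⊓ M := ⟨hkK₂, hkS⟩
  rwa [hM, hinf] at this

/-- Let `G` be a topological group and let `K₁/L₁` and `K₂/L₂` be normal
factors of `G`. If `K₁/L₁` and `K₂/L₂` are associated, then their centralizers in `G`
coincide. -/
theorem stmt_17 {G : Type*} [Group G] [TopologicalSpace G] [IsTopologicalGroup G]
    (K₁ L₁ K₂ L₂ : Subgroup G)
    (hK₁c : IsClosed (K₁ : Set G)) (hL₁c : IsClosed (L₁ : Set G))
    (hK₂c : IsClosed (K₂ : Set G)) (hL₂c : IsClosed (L₂ : Set G))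
    (hK₁n : K₁.Normal) (hL₁n : L₁.Normal) (hK₂n : K₂.Normal) (hL₂n : L₂.Normal)
    (h₁ : L₁ < K₁) (h₂ : L₂ < K₂)
    (hassoc : AssociatedFactors K₁ L₁ K₂ L₂) :
    FactorCentralizer K₁ L₁ = FactorCentralizer K₂ L₂ := by
  obtain ⟨heq, hinf₁, hinf₂⟩ := hassoc
  apply Set.Subset.antisymm
  · exact aux_subset K₁ L₁ K₂ L₂ hL₁n hL₂n hK₂n heq hinf₂
  · exact aux_subset K₂ L₂ K₁ L₁ hL₂n hL₁n hK₁n heq.symm (by rwa [sup_comm L₂ L₁])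
end
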